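/- (Representation, direction C.) For every bunch of layer groups 𝒢, the bunch of layer groups constructed from the involutive FL_e-chain X_𝒢 equals 𝒢, i.e. 𝒢_{(X_𝒢)} = 𝒢; and for every odd or even involutive FL_e-chain X, the involutive FL_e-chain constructed from the bunch 𝒢_X is isomorphic to X, i.e. X_{(𝒢_X)} ≅ X. -/

import Mathlib

open Classical

universe u v

/-- An FL_e-chain: a totally ordered commutative monoid with a residuation operation
`imp` (so that `x * y ≤ z ↔ y ≤ imp x z`) and a falsum constant `fc`.
The monoid unit `1` plays the role of the constant `t`. -/
class FLeChain (X : Type u) extends LinearOrder X, CommMonoid X where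
  imp : X → X → X
  fc : X
  residuation : ∀ x y z : X, x * y ≤ z ↔ y ≤ imp x z

namespace FLe

variable {X : Type u}

/-- The residual `x → y`. -/
def imp [FLeChain X] (x y : X) : X := FLeChain.imp x y

/-- The falsum constant `f`. -/
def fc (X : Type u) [FLeChain X] : X := FLeChain.fc

/-- The residual complement `x' = x → f`. -/
def compl [FLeChain X] (x : X) : X := imp x (fc X)

/-- An FL_e-chain is involutive if `x'' = x` for all `x`. -/
def Involutive (X : Type u) [FLeChain X] : Prop := ∀ x : X, compl (compl x) = x

/-- An involutive FL_e-chain is odd if `t' = t`. -/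
def OddChain (X : Type u) [FLeChain X] : Prop := compl (1 : X) = 1

/-- An involutive FL_e-chain is even if `x < t ↔ x ≤ f` for all `x`. -/
def EvenChain (X : Type u) [FLeChain X] : Prop := ∀ x : X, x < 1 ↔ x ≤ fc X

/-- Odd or even involutive FL_e-chain. -/
def OddEven (X : Type u) [FLeChain X] : Prop := Involutive X ∧ (OddChain X ∨ EvenChain X)

/-- `x` is idempotent. -/
def IsIdem [Mul X] (x : X) : Prop := x * x = x

/-- Homomorphisms of FL_e-chains: order preserving, multiplicative, residual preserving,
and preserving both constants. -/
def IsFLeHom (X : Type u) (Y : Type v) [FLeChain X] [FLeChain Y] (φ : X → Y) : Prop :=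
  Monotone φ ∧ (∀ a b : X, φ (a * b) = φ a * φ b) ∧
    (∀ a b : X, φ (imp a b) = imp (φ a) (φ b)) ∧ φ (1 : X) = 1 ∧ φ (fc X) = fc Y

/-- The skeleton `κ`: the set of positive idempotent elements. -/
def kappa (X : Type u) [FLeChain X] : Set X := {u : X | 1 ≤ u ∧ IsIdem u}

/-- `κ_o`: it is `{t}` if the chain is odd, empty otherwise. -/
def kappaO (X : Type u) [FLeChain X] : Set X := {u : X | u = 1 ∧ OddChain X}

/-- The layer `L_u = {x : x → x = u}`. -/
def layer [FLeChain X] (u : X) : Set X := {x : X | imp x x = u}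

/-- `H_u = {x ∈ L_u : x · u' < x}`, the set of `u`-invertible elements of the layer. -/
def Hs [FLeChain X] (u : X) : Set X := {x : X | x ∈ layer u ∧ x * compl u < x}

/-- The dotted copy `•H_u = {x · u' : x ∈ H_u}`. -/
def dotH [FLeChain X] (u : X) : Set X := (fun x => x * compl u) '' Hs u

/-- `u ∈ κ_I`: a positive idempotent whose complement is idempotent, not in `κ_o`. -/
def inKI [FLeChain X] (u : X) : Prop := u ∈ kappa X ∧ IsIdem (compl u) ∧ u ∉ kappaO X

/-- `u ∈ κ_J`: a positive idempotent whose complement is not idempotent. -/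
def inKJ [FLeChain X] (u : X) : Prop := u ∈ kappa X ∧ ¬ IsIdem (compl u)

/-- The layer group carrier: `G_u = L_u \ •H_u` if `u ∈ κ_I`, and `G_u = L_u` otherwise. -/
def Gs [FLeChain X] (u : X) : Set X := {x : X | x ∈ layer u ∧ (inKI u → x ∉ dotH u)}

/-- The layer group multiplication: `x ·_u y = ((x·y)→u)→u` if `u ∈ κ_I`, `x·y` otherwise. -/
noncomputable def gmul [FLeChain X] (u x y : X) : X :=
  if inKI u then imp (imp (x * y) u) u else x * y

/-- The layer group inversion `x^{-1_u} = x → u`. -/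
def ginv [FLeChain X] (u x : X) : X := imp x u

/-- The union of all layer group carriers. -/
def GX (X : Type u) [FLeChain X] : Set X := ⋃ u ∈ kappa X, Gs u

end FLe

/-! ### Bunches of layer groups -/

/-- The data of a bunch of layer groups over a skeleton type `K` with layers carried by
subsets of an ambient type `Λ`:  a least element `t`, a partition `(Ko, KJ, KI)` of the
skeleton, layer group carriers `G u` with distinguished subsets `H u`, layerwise group
operations `mul`, `inv`, `unit`, layerwise orders `le`, and transitions `tr u v`. -/
structure BunchData (K : Type u) (Λ : Type v) where
  t : K
  Ko : Set K
  KJ : Set K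
  KI : Set K
  G : K → Set Λ
  H : K → Set Λ
  mul : K → Λ → Λ → Λ
  inv : K → Λ → Λ
  unit : K → Λ
  le : K → Λ → Λ → Prop
  tr : K → K → Λ → Λ

namespace BunchData

variable {K : Type u} {Λ : Type v}

/-- Strict layerwise order. -/
def lt (B : BunchData K Λ) (u : K) (x y : Λ) : Prop := B.le u x y ∧ x ≠ y

/-- `p` is the lower cover of `x` in the layer group `G u`. -/
def IsLowerCoverIn (B : BunchData K Λ) (u : K) (p x : Λ) : Prop :=
  p ∈ B.G u ∧ B.lt u p x ∧ ∀ z ∈ B.G u, B.lt u z x → B.le u z p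

/-- `s` is the upper cover of `x` in the layer group `G u`. -/
def IsUpperCoverIn (B : BunchData K Λ) (u : K) (s x : Λ) : Prop :=
  s ∈ B.G u ∧ B.lt u x s ∧ ∀ z ∈ B.G u, B.lt u x z → B.le u s z

/-- The axioms of a bunch of layer groups:  a direct system of totally ordered abelian
groups over a totally ordered skeleton with least element `t` partitioned into
`Ko ∪ KJ ∪ KI`, satisfying (G1), (G2) and (G3). -/
structure IsBunch [LinearOrder K] (B : BunchData K Λ) : Prop where
  t_least : ∀ u : K, B.t ≤ u
  cover : ∀ u : K, u ∈ B.Ko ∨ u ∈ B.KJ ∨ u ∈ B.KI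
  disjOJ : ∀ u : K, ¬(u ∈ B.Ko ∧ u ∈ B.KJ)
  disjOI : ∀ u : K, ¬(u ∈ B.Ko ∧ u ∈ B.KI)
  disjJI : ∀ u : K, ¬(u ∈ B.KJ ∧ u ∈ B.KI)
  -- each layer is a totally ordered abelian group
  unit_mem : ∀ u : K, B.unit u ∈ B.G u
  mul_mem : ∀ u : K, ∀ x ∈ B.G u, ∀ y ∈ B.G u, B.mul u x y ∈ B.G u
  inv_mem : ∀ u : K, ∀ x ∈ B.G u, B.inv u x ∈ B.G u
  mul_assoc' : ∀ u : K, ∀ x ∈ B.G u, ∀ y ∈ B.G u, ∀ z ∈ B.G u,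
    B.mul u (B.mul u x y) z = B.mul u x (B.mul u y z)
  mul_comm' : ∀ u : K, ∀ x ∈ B.G u, ∀ y ∈ B.G u, B.mul u x y = B.mul u y x
  mul_unit' : ∀ u : K, ∀ x ∈ B.G u, B.mul u x (B.unit u) = x
  mul_inv' : ∀ u : K, ∀ x ∈ B.G u, B.mul u x (B.inv u x) = B.unit u
  le_refl' : ∀ u : K, ∀ x ∈ B.G u, B.le u x x
  le_trans' : ∀ u : K, ∀ x ∈ B.G u, ∀ y ∈ B.G u, ∀ z ∈ B.G u,
    B.le u x y → B.le u y z → B.le u x z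
  le_antisymm' : ∀ u : K, ∀ x ∈ B.G u, ∀ y ∈ B.G u, B.le u x y → B.le u y x → x = y
  le_total' : ∀ u : K, ∀ x ∈ B.G u, ∀ y ∈ B.G u, B.le u x y ∨ B.le u y x
  mul_le_mul' : ∀ u : K, ∀ x ∈ B.G u, ∀ y ∈ B.G u, ∀ z ∈ B.G u,
    B.le u x y → B.le u (B.mul u z x) (B.mul u z y)
  -- a direct system of o-group homomorphisms
  tr_mem : ∀ u v : K, u ≤ v → ∀ x ∈ B.G u, B.tr u v x ∈ B.G v
  tr_id : ∀ u : K, ∀ x ∈ B.G u, B.tr u u x = x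
  tr_comp : ∀ u v w : K, u ≤ v → v ≤ w → ∀ x ∈ B.G u, B.tr v w (B.tr u v x) = B.tr u w x
  tr_unit : ∀ u v : K, u ≤ v → B.tr u v (B.unit u) = B.unit v
  tr_mul : ∀ u v : K, u ≤ v → ∀ x ∈ B.G u, ∀ y ∈ B.G u,
    B.tr u v (B.mul u x y) = B.mul v (B.tr u v x) (B.tr u v y)
  tr_mono : ∀ u v : K, u ≤ v → ∀ x ∈ B.G u, ∀ y ∈ B.G u,
    B.le u x y → B.le v (B.tr u v x) (B.tr u v y)
  -- (G1)
  g1 : B.Ko ⊆ {B.t}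
  -- (G2): for v ∈ κ_I, H_v ≤ G_v and transitions from strictly below map into H_v
  g2_sub : ∀ v ∈ B.KI, B.H v ⊆ B.G v ∧ B.unit v ∈ B.H v ∧
    (∀ x ∈ B.H v, ∀ y ∈ B.H v, B.mul v x y ∈ B.H v) ∧ (∀ x ∈ B.H v, B.inv v x ∈ B.H v)
  g2_tr : ∀ v ∈ B.KI, ∀ u : K, u < v → ∀ x ∈ B.G u, B.tr u v x ∈ B.H v
  -- (G3): κ_J-layers are discretely ordered and transitions identify the unit with its
  -- lower cover
  g3_disc : ∀ u ∈ B.KJ, ∀ x ∈ B.G u,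
    (∃ p, B.IsLowerCoverIn u p x) ∧ (∃ s, B.IsUpperCoverIn u s x)
  g3_tr : ∀ u ∈ B.KJ, ∀ v : K, u < v → ∀ p, B.IsLowerCoverIn u p (B.unit u) →
    B.tr u v (B.unit u) = B.tr u v p

end BunchData

/-! ### The bunch of layer groups of an odd or even involutive FL_e-chain -/

namespace FLe

/-- The skeleton of an FL_e-chain, as a type. -/
abbrev kappaT (X : Type u) [FLeChain X] := {w : X // w ∈ kappa X}

/-- The bunch of layer groups `𝒢_X` of an FL_e-chain `X`
(Theorem KATEGOR_BUNCH_X/(A)). -/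
noncomputable def bunchOfChain (X : Type u) [FLeChain X] : BunchData (kappaT X) X where
  t := ⟨1, le_refl 1, mul_one 1⟩
  Ko := {w : kappaT X | (w : X) ∈ kappaO X}
  KJ := {w : kappaT X | inKJ (w : X)}
  KI := {w : kappaT X | inKI (w : X)}
  G w := Gs (w : X)
  H w := Hs (w : X)
  mul w x y := gmul (w : X) x y
  inv w x := ginv (w : X) x
  unit w := (w : X)
  le _ x y := x ≤ y
  tr _ v x := (v : X) * x

end FLe

/-! ### The involutive FL_e-chain of a bunch of layer groups -/

namespace BunchData

variable {K : Type u} {Λ : Type v}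

/-- Raw elements of the constructed chain live in `K × Λ × Bool`;  the element
`(u, z, false)` represents `z ∈ G_u ⊆ L_u`, and `(u, a, true)` represents the dotted copy
`•a ∈ •H_u` (for `u ∈ κ_I`, `a ∈ H_u`). -/
def carrier (B : BunchData K Λ) : Set (K × Λ × Bool) :=
  {p | (p.2.2 = false ∧ p.2.1 ∈ B.G p.1) ∨ (p.2.2 = true ∧ p.1 ∈ B.KI ∧ p.2.1 ∈ B.H p.1)}

variable [LinearOrder K]

/-- The map `ρ_v`: it fixes the layers indexed by `u ≥ v` and pushes the lower layers
into `G_v` by `ς_{u→v} ∘ γ_u`. -/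
def rho (B : BunchData K Λ) (v : K) (p : K × Λ × Bool) : K × Λ × Bool :=
  if v ≤ p.1 then p else (v, B.tr p.1 v p.2.1, false)

/-- The strict order within the layer `L_w`:  dotted copies are inserted immediately
below their originals. -/
def llt (B : BunchData K Λ) (w : K) (p q : K × Λ × Bool) : Prop :=
  B.lt w p.2.1 q.2.1 ∨ (p.2.1 = q.2.1 ∧ p.2.2 = true ∧ q.2.2 = false)

/-- The strict order of the constructed chain:
`x < y` iff `ρ_{uv}(x) <_{uv} ρ_{uv}(y)` or (`ρ_{uv}(x) = ρ_{uv}(y)` and `u <_κ v`). -/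
def glt (B : BunchData K Λ) (p q : K × Λ × Bool) : Prop :=
  B.llt (max p.1 q.1) (B.rho (max p.1 q.1) p) (B.rho (max p.1 q.1) q) ∨
    (B.rho (max p.1 q.1) p = B.rho (max p.1 q.1) q ∧ p.1 < q.1)

/-- The order of the constructed chain. -/
def gle (B : BunchData K Λ) (p q : K × Λ × Bool) : Prop := B.glt p q ∨ p = q

/-- The product `∗_w` within the layer `L_w`. -/
noncomputable def star (B : BunchData K Λ) (w : K) (p q : K × Λ × Bool) : K × Λ × Bool :=
  if w ∈ B.KI ∧ B.mul w p.2.1 q.2.1 ∈ B.H w ∧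
      ¬(p.2.1 ∈ B.H w ∧ p.2.2 = false ∧ q.2.1 ∈ B.H w ∧ q.2.2 = false)
  then (w, B.mul w p.2.1 q.2.1, true)
  else (w, B.mul w p.2.1 q.2.1, false)

/-- The multiplication of the constructed chain: `x · y = ρ_{uv}(x) ∗_{uv} ρ_{uv}(y)`. -/
noncomputable def gmulB (B : BunchData K Λ) (p q : K × Λ × Bool) : K × Λ × Bool :=
  B.star (max p.1 q.1) (B.rho (max p.1 q.1) p) (B.rho (max p.1 q.1) q)

/-- The lower cover of `y` in the layer group `G_u` (chosen classically). -/
noncomputable def lowerCoverFn (B : BunchData K Λ) (u : K) (y : Λ) : Λ :=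
  @Classical.epsilon Λ ⟨B.unit B.t⟩ (fun p => B.IsLowerCoverIn u p y)

/-- The residual complement `x^⊥` of the constructed chain. -/
noncomputable def negB (B : BunchData K Λ) (p : K × Λ × Bool) : K × Λ × Bool :=
  if p.1 ∈ B.KI ∧ p.2.2 = true then (p.1, B.inv p.1 p.2.1, false)
  else if p.1 ∈ B.KI ∧ p.2.1 ∈ B.H p.1 then (p.1, B.inv p.1 p.2.1, true)
  else if p.1 ∈ B.KJ then (p.1, B.lowerCoverFn p.1 (B.inv p.1 p.2.1), false)
  else (p.1, B.inv p.1 p.2.1, false)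

/-- The residual of the constructed chain: `x → y = (x · y^⊥)^⊥`. -/
noncomputable def impB (B : BunchData K Λ) (p q : K × Λ × Bool) : K × Λ × Bool :=
  B.negB (B.gmulB p (B.negB q))

/-- The unit `t` of the constructed chain. -/
def tB (B : BunchData K Λ) : K × Λ × Bool := (B.t, B.unit B.t, false)

/-- The falsum `f = t^⊥` of the constructed chain. -/
noncomputable def fB (B : BunchData K Λ) : K × Λ × Bool := B.negB B.tB

end BunchData

/-! ### Chain operations on a subset of an ambient type, and the induced layer data -/

/-- The operations of an FL_e-chain carried by a subset `C` of an ambient type `A`. -/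
structure ChainOps (A : Type u) where
  C : Set A
  mul : A → A → A
  imp : A → A → A
  le : A → A → Prop
  t : A
  f : A

namespace ChainOps

variable {A : Type u} (O : ChainOps A)

def lt (x y : A) : Prop := O.le x y ∧ x ≠ y
def compl (x : A) : A := O.imp x O.f
def IsIdem (x : A) : Prop := O.mul x x = x
def kappa : Set A := {w : A | w ∈ O.C ∧ O.le O.t w ∧ O.IsIdem w}
def isOdd : Prop := O.compl O.t = O.t
def kappaO : Set A := {w : A | w = O.t ∧ O.isOdd}
def inKI (w : A) : Prop := w ∈ O.kappa ∧ O.IsIdem (O.compl w) ∧ w ∉ O.kappaO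
def inKJ (w : A) : Prop := w ∈ O.kappa ∧ ¬ O.IsIdem (O.compl w)
def layer (w : A) : Set A := {x : A | x ∈ O.C ∧ O.imp x x = w}
def Hs (w : A) : Set A := {x : A | x ∈ O.layer w ∧ O.lt (O.mul x (O.compl w)) x}
def dotH (w : A) : Set A := (fun x => O.mul x (O.compl w)) '' O.Hs w
def Gs (w : A) : Set A := {x : A | x ∈ O.layer w ∧ (O.inKI w → x ∉ O.dotH w)}
noncomputable def gmul (w x y : A) : A :=
  if O.inKI w then O.imp (O.imp (O.mul x y) w) w else O.mul x y
def ginv (w x : A) : A := O.imp x w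
def tr (v x : A) : A := O.mul v x

end ChainOps

/-! ### Bunch homomorphisms -/

/-- A bunch homomorphism from `B₁` to `B₂`, given by its skeleton part `σ` and its action
`Φ` on the union of the layer groups;  conditions (S1)–(S8). -/
def IsBunchHomB {K₁ Λ₁ K₂ Λ₂ : Type*}
    [LinearOrder K₁] [LinearOrder K₂]
    (B₁ : BunchData K₁ Λ₁) (B₂ : BunchData K₂ Λ₂) (σ : K₁ → K₂) (Φ : Λ₁ → Λ₂) : Prop :=
  -- (S1): the skeleton part is isotone
  Monotone σ ∧
  -- (S2): each Φ_u is an o-group homomorphism from G_u into G_{σ u}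
  (∀ u : K₁, ∀ x ∈ B₁.G u, Φ x ∈ B₂.G (σ u)) ∧
  (∀ u : K₁, Φ (B₁.unit u) = B₂.unit (σ u)) ∧
  (∀ u : K₁, ∀ x ∈ B₁.G u, ∀ y ∈ B₁.G u, Φ (B₁.mul u x y) = B₂.mul (σ u) (Φ x) (Φ y)) ∧
  (∀ u : K₁, ∀ x ∈ B₁.G u, Φ (B₁.inv u x) = B₂.inv (σ u) (Φ x)) ∧
  (∀ u : K₁, ∀ x ∈ B₁.G u, ∀ y ∈ B₁.G u, B₁.le u x y → B₂.le (σ u) (Φ x) (Φ y)) ∧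
  -- (S3): Φ commutes with the transitions
  (∀ u v : K₁, u ≤ v → ∀ x ∈ B₁.G u, Φ (B₁.tr u v x) = B₂.tr (σ u) (σ v) (Φ x)) ∧
  -- (S4): the least element of the skeleton is preserved
  σ B₁.t = B₂.t ∧
  -- (S5): the partition is respected
  (∀ u ∈ B₁.Ko, σ u ∈ B₂.Ko) ∧
  (∀ u ∈ B₁.KJ, σ u ∈ B₂.KJ ∨ σ u ∈ B₂.Ko) ∧
  (∀ u ∈ B₁.KI, σ u ∈ B₂.KI ∨ σ u ∈ B₂.Ko) ∧
  -- (S6): subgroups and their complements are preserved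
  (∀ u ∈ B₁.KI, σ u ∈ B₂.KI →
    (∀ x ∈ B₁.H u, Φ x ∈ B₂.H (σ u)) ∧
    (∀ x ∈ B₁.G u, x ∉ B₁.H u → Φ x ∈ B₂.G (σ u) ∧ Φ x ∉ B₂.H (σ u))) ∧
  -- (S7): the neighborhood operations are respected
  (∀ u ∈ B₁.KJ, σ u ∈ B₂.KJ →
    ∀ x ∈ B₁.G u, ∀ p, B₁.IsLowerCoverIn u p x → B₂.IsLowerCoverIn (σ u) (Φ p) (Φ x)) ∧
  (∀ u ∈ B₁.KJ, σ u ∈ B₂.Ko →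
    ∀ x ∈ B₁.G u, ∀ p, B₁.IsLowerCoverIn u p x → Φ p = Φ x) ∧
  -- (S8): partial injectivity
  (∀ u v : K₁, ∀ x ∈ B₁.G u, ∀ y ∈ B₁.G v,
    σ (max u v) ∈ B₂.KI →
    B₁.tr u (max u v) x ∈ B₁.H (max u v) →
    B₁.IsLowerCoverIn (max u v) (B₁.tr v (max u v) y) (B₁.tr u (max u v) x) →
    B₂.IsLowerCoverIn (σ (max u v)) (Φ (B₁.tr v (max u v) y)) (Φ (B₁.tr u (max u v) x)))

/-- An isomorphism in the category of bunches of layer groups. -/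
def IsBunchIso {K₁ Λ₁ K₂ Λ₂ : Type*}
    [LinearOrder K₁] [LinearOrder K₂]
    (B₁ : BunchData K₁ Λ₁) (B₂ : BunchData K₂ Λ₂) (σ : K₁ → K₂) (Φ : Λ₁ → Λ₂) : Prop :=
  IsBunchHomB B₁ B₂ σ Φ ∧
    ∃ (σ' : K₂ → K₁) (Φ' : Λ₂ → Λ₁), IsBunchHomB B₂ B₁ σ' Φ' ∧
      (∀ u : K₁, σ' (σ u) = u) ∧ (∀ v : K₂, σ (σ' v) = v) ∧
      (∀ u : K₁, ∀ x ∈ B₁.G u, Φ' (Φ x) = x) ∧ (∀ v : K₂, ∀ y ∈ B₂.G v, Φ (Φ' y) = y)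

namespace FLe

/-- The extension of a bunch homomorphism `Φ` between the bunches of two chains to the
whole chain: on `G_u` it is `Φ`, and the dotted copy `•a ∈ •H_u` is sent to `Φ(a)` if
`Φ(u) ∈ κ_o`, and to the dotted copy `•(Φ a)` if `Φ(u) ∈ κ_I`. -/
noncomputable def extendHom (X : Type u) (Y : Type v) [FLeChain X] [FLeChain Y]
    (Φ : X → Y) (x : X) : Y :=
  if x ∈ Gs (imp x x) then Φ x
  else if inKI (Φ (imp x x)) then Φ (imp (compl x) (imp x x)) * compl (Φ (imp x x))
  else Φ (imp (compl x) (imp x x))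

end FLe

open FLe BunchData


set_option linter.unusedSectionVars false

namespace FLe

variable {X : Type u}

variable [FLeChain X]

theorem resid {x y z : X} : x * y ≤ z ↔ y ≤ imp x z := FLeChain.residuation x y z

theorem imp_mul_le (x z : X) : x * imp x z ≤ z := resid.mpr le_rfl

theorem mul_le_mul_left3 (c : X) {a b : X} (h : a ≤ b) : c * a ≤ c * b :=
  resid.mpr (le_trans h (resid.mp le_rfl))

theorem mul_le_mul3 {a b c d : X} (h1 : a ≤ b) (h2 : c ≤ d) : a * c ≤ b * d := by
  calc a * c ≤ a * d := mul_le_mul_left3 a h2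
    _ = d * a := mul_comm _ _
    _ ≤ d * b := mul_le_mul_left3 d h1
    _ = b * d := mul_comm _ _

theorem le_mul_self {a w : X} (h : 1 ≤ w) : a ≤ w * a := by
  have := mul_le_mul3 h (le_refl a); rwa [one_mul] at this

theorem imp_le_impl {a b c : X} (h : a ≤ b) : imp b c ≤ imp a c :=
  resid.mp (le_trans (mul_le_mul3 h le_rfl) (imp_mul_le b c))

theorem imp_le_impr {a c d : X} (h : c ≤ d) : imp a c ≤ imp a d :=
  resid.mp (le_trans (imp_mul_le a c) h)

theorem one_le_impself (x : X) : 1 ≤ imp x x := resid.mp (by rw [mul_one])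

theorem impself_mul (x : X) : imp x x * x = x := by
  apply le_antisymm
  · rw [mul_comm]; exact imp_mul_le x x
  · have := le_mul_self (a := x) (one_le_impself x); exact this

theorem stab_iff {x z : X} (h1 : 1 ≤ z) : z * x = x ↔ z ≤ imp x x := by
  constructor
  · intro h; exact resid.mp (by rw [mul_comm, h])
  · intro h
    apply le_antisymm
    · rw [mul_comm]; exact le_trans (mul_le_mul3 le_rfl h) (imp_mul_le x x)
    · exact le_mul_self h1

theorem impself_idem (x : X) : IsIdem (imp x x) := by
  unfold IsIdem
  apply le_antisymm
  · apply resid.mp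
    have h : x * (imp x x * imp x x) = (imp x x * x) * imp x x := by
      simp only [mul_comm, mul_assoc, mul_left_comm]
    rw [h, impself_mul, mul_comm]
    exact (impself_mul x).le
  · exact le_mul_self (one_le_impself x)

theorem impself_kappa (x : X) : imp x x ∈ kappa X := ⟨one_le_impself x, impself_idem x⟩

theorem one_imp (y : X) : imp 1 y = y := by
  apply le_antisymm
  · have := imp_mul_le 1 y; rwa [one_mul] at this
  · exact resid.mp (by rw [one_mul])

theorem compl_one : compl (1 : X) = fc X := one_imp _

theorem le_compl_iff {a x : X} : a ≤ compl x ↔ x * a ≤ fc X := resid.symm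

theorem mul_compl_le (x : X) : x * compl x ≤ fc X := imp_mul_le x _

theorem compl_anti {a b : X} (h : a ≤ b) : compl b ≤ compl a := imp_le_impl h

theorem imp_curry (x y z : X) : imp (x * y) z = imp y (imp x z) := by
  apply le_antisymm
  · apply resid.mp; apply resid.mp
    rw [← mul_assoc]
    exact imp_mul_le _ z
  · apply resid.mp
    rw [mul_assoc]
    exact le_trans (mul_le_mul_left3 x (imp_mul_le y _)) (imp_mul_le x z)

theorem compl_mul (x y : X) : compl (x * y) = imp y (compl x) := imp_curry x y _

section Invol

variable (hinv : Involutive X)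
include hinv

theorem compl_le_iff {a b : X} : compl b ≤ compl a ↔ a ≤ b := by
  constructor
  · intro h; have := compl_anti h; rwa [hinv, hinv] at this
  · exact compl_anti

theorem compl_inj {a b : X} (h : compl a = compl b) : a = b := by
  rw [← hinv a, h, hinv]

theorem imp_eq_compl (x y : X) : imp x y = compl (x * compl y) := by
  rw [mul_comm, compl_mul, hinv]

theorem le_iff_mul_compl {x y : X} : x ≤ y ↔ x * compl y ≤ fc X := by
  rw [← compl_le_iff hinv]; exact le_compl_iff

theorem lt_iff_f_lt {x y : X} : y < x ↔ fc X < x * compl y := by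
  rw [lt_iff_not_ge, lt_iff_not_ge]
  apply not_congr
  exact le_iff_mul_compl hinv

theorem layer_compl (x : X) : imp (compl x) (compl x) = imp x x := by
  rw [imp_eq_compl hinv, imp_eq_compl hinv (x := x), hinv, mul_comm]

end Invol

section OE

variable (hinv : Involutive X) (hoe : OddChain X ∨ EvenChain X)
include hinv hoe

omit hinv in
theorem f_le_one : fc X ≤ 1 := by
  rcases hoe with h | h
  · rw [← compl_one, h]
  · exact le_of_lt ((h (fc X)).mpr le_rfl)

omit hinv in
theorem one_le_of_f_lt {a : X} (h : fc X < a) : 1 ≤ a := by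
  rcases hoe with ho | he
  · rw [← compl_one, ho] at h; exact le_of_lt h
  · by_contra hc
    push_neg at hc
    exact absurd ((he a).mp hc) (not_le_of_gt h)

theorem one_le_of_lt {y a : X} (h : y < a * y) : 1 ≤ a * y * compl y := by
  refine one_le_of_f_lt hoe ?_
  have := (lt_iff_f_lt hinv).mp h
  exact this

/-- The fundamental lemma: the layer of a product is the maximum of the layers. -/
theorem layer_mul_le {x y : X} (h : imp x x ≤ imp y y) :
    imp (x * y) (x * y) = imp y y := by
  have h1w : 1 ≤ imp (x * y) (x * y) := one_le_impself _
  have hvw : imp y y ≤ imp (x * y) (x * y) := by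
    rw [← stab_iff (le_trans (one_le_impself x) h)]
    rw [← mul_assoc, mul_comm (imp y y) x, mul_assoc, impself_mul]
  rcases eq_or_lt_of_le hvw with he | hlt
  · exact he.symm
  · exfalso
    have hwxy : imp (x * y) (x * y) * (x * y) = x * y := (stab_iff h1w).mpr le_rfl
    have hwy : compl y < imp (x * y) (x * y) * compl y := by
      rcases lt_or_ge (compl y) (imp (x * y) (x * y) * compl y) with h' | h'
      · exact h'
      · exfalso
        have h2 : imp (x * y) (x * y) * compl y = compl y := le_antisymm h' (le_mul_self h1w)
        have h3 : imp (x * y) (x * y) ≤ imp y y := by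
          rw [← layer_compl hinv y]; exact ((stab_iff h1w).mp h2)
        exact absurd h3 (not_le_of_gt hlt)
    have hf : fc X < (imp (x * y) (x * y) * compl y) * compl (compl y) := (lt_iff_f_lt hinv).mp hwy
    rw [hinv y] at hf
    have h1 : 1 ≤ imp (x * y) (x * y) * compl y * y := one_le_of_f_lt hoe hf
    have hxle : x ≤ x * y * compl y := by
      calc x = x * 1 := (mul_one x).symm
        _ ≤ x * (imp (x * y) (x * y) * compl y * y) := mul_le_mul_left3 x h1
        _ = imp (x * y) (x * y) * (x * y) * compl y := by
            simp only [mul_comm, mul_assoc, mul_left_comm]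
        _ = x * y * compl y := by rw [hwxy]
    have hxge : x * y * compl y ≤ x := by
      calc x * y * compl y = x * (y * compl y) := by rw [mul_assoc]
        _ ≤ x * fc X := mul_le_mul_left3 x (mul_compl_le y)
        _ ≤ x * 1 := mul_le_mul_left3 x (f_le_one hoe)
        _ = x := mul_one x
    have hxeq : x * y * compl y = x := le_antisymm hxge hxle
    have hwx : imp (x * y) (x * y) * x = x := by
      calc imp (x * y) (x * y) * x = imp (x * y) (x * y) * (x * y * compl y) := by rw [hxeq]
        _ = (imp (x * y) (x * y) * (x * y)) * compl y := by
            simp only [mul_comm, mul_assoc, mul_left_comm]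
        _ = x * y * compl y := by rw [hwxy]
        _ = x := hxeq
    have h4 : imp (x * y) (x * y) ≤ imp x x := (stab_iff h1w).mp hwx
    exact absurd (le_trans h4 h) (not_le_of_gt hlt)

theorem layer_mul (x y : X) :
    imp (x * y) (x * y) = max (imp x x) (imp y y) := by
  rcases le_total (imp x x) (imp y y) with h | h
  · rw [max_eq_right h]; exact layer_mul_le hinv hoe h
  · rw [max_eq_left h, mul_comm]; exact layer_mul_le hinv hoe h

end OE

section OE2

variable (hinv : Involutive X) (hoe : OddChain X ∨ EvenChain X)

omit [FLeChain X] in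
theorem tauto1 : True := trivial

include hoe in
theorem complu_le_one {u : X} (hu1 : 1 ≤ u) : compl u ≤ 1 := by
  have h := compl_anti hu1
  rw [compl_one] at h
  exact le_trans h (f_le_one hoe)

include hoe in
theorem mul_complu_le {u : X} (hu1 : 1 ≤ u) (x : X) : x * compl u ≤ x := by
  calc x * compl u ≤ x * 1 := mul_le_mul_left3 x (complu_le_one hoe hu1)
    _ = x := mul_one x

theorem layer_u_self {u : X} (hu : u ∈ kappa X) : imp u u = u := by
  apply le_antisymm
  · exact le_trans (le_mul_self hu.1) (imp_mul_le u u)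
  · exact resid.mp (le_of_eq hu.2)

theorem stab_layer {u x : X} (hx : imp x x = u) : u * x = x := by
  rw [← hx]; exact impself_mul x

include hinv in
theorem u_compl_layer {u : X} (hu : u ∈ kappa X) :
    imp (compl u) (compl u) = u := by
  rw [layer_compl hinv, layer_u_self hu]

include hinv hoe in
/-- T1 : `v · u' = v` for idempotents `u < v`. -/
theorem mul_compl_kappa_lt {u v : X} (hu1 : 1 ≤ u) (hv : v ∈ kappa X) (h : u < v) :
    v * compl u = v := by
  apply le_antisymm (mul_complu_le hoe hu1 v)
  have hf : fc X < v * compl u := (lt_iff_f_lt hinv).mp h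
  have h2 : 1 ≤ v * compl u := one_le_of_f_lt hoe hf
  calc v = v * 1 := (mul_one v).symm
    _ ≤ v * (v * compl u) := mul_le_mul_left3 v h2
    _ = (v * v) * compl u := (mul_assoc v v _).symm
    _ = v * compl u := by rw [hv.2]

include hinv hoe in
/-- S3 : invertibility of elements of `H_u`. -/
theorem hinv_mul {u x : X} (hx : imp x x = u) (hH : x * compl u < x) :
    x * imp x u = u := by
  have h1 : compl (x * compl u) = imp x u := (imp_eq_compl hinv x u).symm
  have hf : fc X < x * compl (x * compl u) := (lt_iff_f_lt hinv).mp hH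
  rw [h1] at hf
  have h2 : 1 ≤ x * imp x u := one_le_of_f_lt hoe hf
  apply le_antisymm (imp_mul_le x u)
  calc u = u * 1 := (mul_one u).symm
    _ ≤ u * (x * imp x u) := mul_le_mul_left3 u h2
    _ = (u * x) * imp x u := (mul_assoc u x _).symm
    _ = x * imp x u := by rw [stab_layer hx]

include hinv hoe in
theorem u_mul_compl_lt {u : X} (hKI : inKI u) : u * compl u < u := by
  rcases lt_or_ge (u * compl u) u with h | h
  · exact h
  · exfalso
    have heq : u * compl u = u := le_antisymm (mul_complu_le hoe hKI.1.1 u) h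
    have hle : u ≤ fc X := heq ▸ mul_compl_le u
    rcases hoe with ho | he
    · have hf1 : fc X = 1 := by rw [← compl_one, ho]
      exact hKI.2.2 ⟨le_antisymm (hf1 ▸ hle) hKI.1.1, ho⟩
    · exact absurd ((he u).mpr hle) (not_lt_of_ge hKI.1.1)

include hinv hoe in
theorem u_mem_H {u : X} (hKI : inKI u) : u ∈ Hs u :=
  ⟨layer_u_self hKI.1, u_mul_compl_lt hinv hoe hKI⟩

include hinv hoe in
/-- transitions land in `H_v`. -/
theorem trans_mem_H {u v x : X} (hx : imp x x = u) (hv : v ∈ kappa X) (huv : u < v) :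
    v * x ∈ Hs v := by
  have h1u : (1:X) ≤ u := hx ▸ one_le_impself x
  have hlay : imp (v * x) (v * x) = v := by
    rw [layer_mul hinv hoe, layer_u_self hv, hx, max_eq_left (le_of_lt huv)]
  have hxv : x * compl v < x := by
    rcases lt_or_ge (x * compl v) x with h | h
    · exact h
    · exfalso
      have heq : x * compl v = x := le_antisymm (mul_complu_le hoe (le_trans h1u (le_of_lt huv)) x) h
      have h2 : imp (x * compl v) (x * compl v) = v := by
        rw [layer_mul hinv hoe, u_compl_layer hinv hv, hx, max_eq_right (le_of_lt huv)]
      rw [heq, hx] at h2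
      exact absurd h2 (ne_of_lt huv)
  have h1 : compl (x * compl v) = imp x v := (imp_eq_compl hinv x v).symm
  have hf : fc X < x * compl (x * compl v) := (lt_iff_f_lt hinv).mp hxv
  rw [h1] at hf
  have h2 : 1 ≤ x * imp x v := one_le_of_f_lt hoe hf
  have hzv : (v * x) * imp x v = v := by
    apply le_antisymm
    · calc (v * x) * imp x v = v * (x * imp x v) := mul_assoc _ _ _
        _ ≤ v * v := mul_le_mul_left3 v (imp_mul_le x v)
        _ = v := hv.2
    · calc v = v * 1 := (mul_one v).symm
        _ ≤ v * (x * imp x v) := mul_le_mul_left3 v h2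
        _ = (v * x) * imp x v := (mul_assoc v x _).symm
  refine ⟨hlay, ?_⟩
  rcases lt_or_ge ((v * x) * compl v) (v * x) with h | h
  · exact h
  · exfalso
    have heq : (v * x) * compl v = v * x :=
      le_antisymm (mul_complu_le hoe hv.1 _) h
    have h3 : v = v * compl v := by
      calc v = (v * x) * imp x v := hzv.symm
        _ = ((v * x) * compl v) * imp x v := by rw [heq]
        _ = ((v * x) * imp x v) * compl v := by
            simp only [mul_comm, mul_assoc, mul_left_comm]
        _ = v * compl v := by rw [hzv]
    have h4 : v ≤ fc X := h3.le.trans (mul_compl_le v)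
    have : v ≤ 1 := le_trans h4 (f_le_one hoe)
    exact absurd (lt_of_le_of_lt h1u huv) (not_lt_of_ge this)

include hinv in
theorem compl_lt_compl {a b : X} (h : a < b) : compl b < compl a :=
  lt_of_le_of_ne (compl_anti h.le)
    (fun he => absurd (compl_inj hinv he) (ne_of_lt h).symm)

include hinv hoe in
/-- the dotted copy is the lower cover within the layer (COVER). -/
theorem dot_cover {u b z : X} (hb : b ∈ Hs u) (hz : imp z z = u) (hlt : z < b) :
    z ≤ b * compl u := by
  have hbi : b * imp b u = u := hinv_mul hinv hoe hb.1 hb.2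
  have h1 : z * imp b u ≤ fc X := by
    by_contra hc
    push_neg at hc
    have h2 : 1 ≤ z * imp b u := one_le_of_f_lt hoe hc
    have h3 : b ≤ z := by
      calc b = 1 * b := (one_mul b).symm
        _ ≤ (z * imp b u) * b := mul_le_mul3 h2 le_rfl
        _ = z * (b * imp b u) := by simp only [mul_comm, mul_assoc, mul_left_comm]
        _ = z * u := by rw [hbi]
        _ = z := by rw [mul_comm]; exact stab_layer hz
    exact absurd h3 (not_le_of_gt hlt)
  have h3 : z ≤ compl (imp b u) := le_compl_iff.mpr (by rwa [mul_comm] at h1)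
  rwa [imp_eq_compl hinv b u, hinv] at h3

include hinv hoe in
/-- In κ_J layers, every element is invertible (K1). -/
theorem KJ_all_H {u z : X} (hu : u ∈ kappa X) (hJ : ¬ IsIdem (compl u))
    (hz : imp z z = u) : z * compl u < z := by
  rcases lt_or_ge (z * compl u) z with h | h
  · exact h
  · exfalso
    apply hJ
    have hA : z * compl u = z := le_antisymm (mul_complu_le hoe hu.1 z) h
    have h1 : z * compl z = compl u := by
      rw [← hz, ← hinv (z * compl z), ← imp_eq_compl hinv z z]
    show compl u * compl u = compl u
    calc compl u * compl u = (z * compl z) * compl u := by rw [h1]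
      _ = (z * compl u) * compl z := by simp only [mul_comm, mul_assoc, mul_left_comm]
      _ = z * compl z := by rw [hA]
      _ = compl u := h1

include hinv hoe in
/-- In κ_J layers, `z'` is the lower cover of `z⁻¹ = z→u` in the layer. -/
theorem KJ_compl_lower {u z : X} (hu : u ∈ kappa X) (hJ : ¬ IsIdem (compl u))
    (hz : imp z z = u) :
    imp (compl z) (compl z) = u ∧ compl z < imp z u ∧
      ∀ w, imp w w = u → w < imp z u → w ≤ compl z := by
  have hH := KJ_all_H hinv hoe hu hJ hz
  have hzi : z * imp z u = u := hinv_mul hinv hoe hz hH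
  refine ⟨by rw [layer_compl hinv, hz], ?_, ?_⟩
  · rw [imp_eq_compl hinv z u]
    exact compl_lt_compl hinv hH
  · intro w hw hlt
    by_contra hc
    push_neg at hc
    have hf : fc X < w * compl (compl z) := (lt_iff_f_lt hinv).mp hc
    rw [hinv] at hf
    have h1 : 1 ≤ w * z := one_le_of_f_lt hoe hf
    have h4 : imp z u ≤ w := by
      calc imp z u = 1 * imp z u := (one_mul _).symm
        _ ≤ (w * z) * imp z u := mul_le_mul3 h1 le_rfl
        _ = w * (z * imp z u) := mul_assoc _ _ _
        _ = w * u := by rw [hzi]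
        _ = w := by rw [mul_comm]; exact stab_layer hw
    exact absurd h4 (not_le_of_gt hlt)

section KI

variable {u : X} (hKI : inKI u)

include hinv hoe hKI

theorem dot_layer {z : X} (hz : imp z z = u) :
    imp (z * compl u) (z * compl u) = u := by
  rw [layer_mul hinv hoe, hz, u_compl_layer hinv hKI.1, max_self]

theorem H_inv_mul {a : X} (ha : a ∈ Hs u) : a * imp a u = u :=
  hinv_mul hinv hoe ha.1 ha.2

theorem inv_layer {a : X} (ha : imp a a = u) :
    imp (imp a u) (imp a u) = u := by
  rw [imp_eq_compl hinv a u, layer_compl hinv]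
  exact dot_layer hinv hoe hKI ha

omit hinv hoe in
theorem dot_absorb {z : X} : (z * compl u) * compl u = z * compl u := by
  rw [mul_assoc, show compl u * compl u = compl u from hKI.2.1]

omit hoe hKI in
theorem dot_compl {a : X} : compl (a * compl u) = imp a u :=
  (imp_eq_compl hinv a u).symm

theorem inv_mem_H {a : X} (ha : a ∈ Hs u) : imp a u ∈ Hs u := by
  refine ⟨inv_layer hinv hoe hKI ha.1, ?_⟩
  rcases lt_or_ge (imp a u * compl u) (imp a u) with h | h
  · exact h
  · exfalso
    have heq : imp a u * compl u = imp a u :=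
      le_antisymm (mul_complu_le hoe hKI.1.1 _) h
    have h2 : u = u * compl u := by
      calc u = a * imp a u := (H_inv_mul hinv hoe hKI ha).symm
        _ = a * (imp a u * compl u) := by rw [heq]
        _ = (a * imp a u) * compl u := (mul_assoc _ _ _).symm
        _ = u * compl u := by rw [H_inv_mul hinv hoe hKI ha]
    have hlt := u_mul_compl_lt hinv hoe hKI
    rw [← h2] at hlt
    exact lt_irrefl u hlt

theorem H_recover {a : X} (ha : a ∈ Hs u) : imp (imp a u) u = a := by
  have hbH : imp a u ∈ Hs u := inv_mem_H hinv hoe hKI ha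
  have h1 : u * imp (imp a u) u = imp (imp a u) u :=
    stab_layer (inv_layer hinv hoe hKI hbH.1)
  calc imp (imp a u) u = u * imp (imp a u) u := h1.symm
    _ = (a * imp a u) * imp (imp a u) u := by rw [H_inv_mul hinv hoe hKI ha]
    _ = a * (imp a u * imp (imp a u) u) := mul_assoc _ _ _
    _ = a * u := by rw [H_inv_mul hinv hoe hKI hbH]
    _ = a := by rw [mul_comm]; exact stab_layer ha.1

theorem compl_H_dot {a : X} (ha : a ∈ Hs u) : compl a = imp a u * compl u := by
  have h1 : compl (imp a u * compl u) = a := by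
    rw [dot_compl hinv]
    exact H_recover hinv hoe hKI ha
  have h2 := congrArg compl h1
  rw [hinv] at h2
  exact h2.symm

omit hinv hoe in
theorem H_notin_dot {a : X} (ha : a ∈ Hs u) : a ∉ dotH u := by
  rintro ⟨c, hc, hca⟩
  have h1 : a * compl u = a := by
    rw [← hca]; exact dot_absorb hKI
  have h2 := ha.2
  rw [h1] at h2
  exact lt_irrefl a h2

omit hinv hoe in
theorem H_sub_G {a : X} (ha : a ∈ Hs u) : a ∈ Gs u :=
  ⟨ha.1, fun _ => H_notin_dot hKI ha⟩

theorem HmulH {a b : X} (ha : a ∈ Hs u) (hb : b ∈ Hs u) : a * b ∈ Hs u := by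
  have hlay : imp (a * b) (a * b) = u := by
    rw [layer_mul hinv hoe, ha.1, hb.1, max_self]
  refine ⟨hlay, ?_⟩
  rcases lt_or_ge ((a * b) * compl u) (a * b) with h | h
  · exact h
  · exfalso
    have heq : (a * b) * compl u = a * b :=
      le_antisymm (mul_complu_le hoe hKI.1.1 _) h
    have h2 : u * compl u = u := by
      calc u * compl u = ((u * u) * compl u) := by
            rw [show u * u = u from hKI.1.2]
        _ = ((a * imp a u) * (b * imp b u)) * compl u := by
            rw [H_inv_mul hinv hoe hKI ha, H_inv_mul hinv hoe hKI hb]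
        _ = (imp a u * imp b u) * ((a * b) * compl u) := by
            simp only [mul_comm, mul_assoc, mul_left_comm]
        _ = (imp a u * imp b u) * (a * b) := by rw [heq]
        _ = (a * imp a u) * (b * imp b u) := by
            simp only [mul_comm, mul_assoc, mul_left_comm]
        _ = u * u := by rw [H_inv_mul hinv hoe hKI ha, H_inv_mul hinv hoe hKI hb]
        _ = u := hKI.1.2
    have hlt := u_mul_compl_lt hinv hoe hKI
    rw [h2] at hlt
    exact lt_irrefl u hlt

theorem absorber_compl {z : X} (hz : imp z z = u) (hA : z * compl u = z)
    (hnd : z ∉ dotH u) : compl z * compl u = compl z ∧ compl z ∉ dotH u := by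
  have hzl : imp (compl z) (compl z) = u := by rw [layer_compl hinv, hz]
  have hnH : compl z ∉ Hs u := by
    intro hH
    apply hnd
    refine ⟨imp (compl z) u, inv_mem_H hinv hoe hKI hH, ?_⟩
    have h := compl_H_dot hinv hoe hKI hH
    rw [hinv] at h
    exact h.symm
  have habs : compl z * compl u = compl z := by
    rcases lt_or_ge (compl z * compl u) (compl z) with h | h
    · exact absurd ⟨hzl, h⟩ hnH
    · exact le_antisymm (mul_complu_le hoe hKI.1.1 _) h
  refine ⟨habs, ?_⟩
  rintro ⟨c, hc, hcz⟩
  have h2 : z = imp c u := by rw [← hinv z, ← hcz, dot_compl hinv]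
  have h3 : z ∈ Hs u := h2 ▸ inv_mem_H hinv hoe hKI hc
  have h4 := h3.2
  rw [hA] at h4
  exact lt_irrefl z h4

theorem cl_dot {a : X} (ha : a ∈ Hs u) :
    imp (imp (a * compl u) u) u = a := by
  have h1 : imp (a * compl u) u = imp a u := by
    rw [imp_eq_compl hinv (a * compl u) u, dot_absorb hKI, dot_compl hinv]
  rw [h1]
  exact H_recover hinv hoe hKI ha

theorem cl_A {z : X} (hz : imp z z = u) (hA : z * compl u = z) (hnd : z ∉ dotH u) :
    imp (imp z u) u = z := by
  have h1 : imp z u = compl z := by rw [imp_eq_compl hinv z u, hA]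
  have h2 : imp (compl z) u = compl (compl z) := by
    rw [imp_eq_compl hinv (compl z) u, (absorber_compl hinv hoe hKI hz hA hnd).1]
  rw [h1, h2, hinv]

omit hinv hoe in
theorem mem_G_cases {x : X} (hG : x ∈ Gs u) (h1 : (1:X) ≤ u) (hf1 : fc X ≤ 1) :
    x ∈ Hs u ∨ (x * compl u = x ∧ x ∉ dotH u) := by
  by_cases h : x ∈ Hs u
  · left; exact h
  · right
    refine ⟨?_, hG.2 hKI⟩
    rcases lt_or_ge (x * compl u) x with h' | h'
    · exact absurd ⟨hG.1, h'⟩ h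
    · refine le_antisymm ?_ h'
      calc x * compl u ≤ x * 1 := mul_le_mul_left3 x (le_trans (by
            have := compl_anti h1; rwa [compl_one] at this) hf1)
        _ = x := mul_one x

end KI

theorem psi_dichotomy (x : X) :
    x ∈ Gs (imp x x) ∨ (inKI (imp x x) ∧ x ∈ dotH (imp x x)) := by
  by_cases h : x ∈ Gs (imp x x)
  · left; exact h
  · right
    have hA : x ∈ layer (imp x x) := rfl
    by_cases hk : inKI (imp x x)
    · by_cases hd : x ∈ dotH (imp x x)
      · exact ⟨hk, hd⟩
      · exact absurd ⟨hA, fun _ => hd⟩ h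
    · exact absurd ⟨hA, fun hkk => absurd hkk hk⟩ h

end OE2


noncomputable def gam (x : X) : X :=
  if x ∈ Gs (imp x x) then x else imp (compl x) (imp x x)

noncomputable def psi (X : Type u) [FLeChain X] (x : X) : kappaT X × X × Bool :=
  (⟨imp x x, impself_kappa x⟩, gam x, if x ∈ Gs (imp x x) then false else true)

theorem psi_eq_undot {x : X} (hG : x ∈ Gs (imp x x)) {h : imp x x ∈ kappa X} :
    psi X x = (⟨imp x x, h⟩, x, false) := by
  unfold psi gam
  rw [if_pos hG, if_pos hG]

section PSI

variable (hinv : Involutive X) (hoe : OddChain X ∨ EvenChain X)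
include hinv hoe

theorem psi_eq_dot {x a : X} (hKI : inKI (imp x x)) (ha : a ∈ Hs (imp x x))
    (hax : a * compl (imp x x) = x) {h : imp x x ∈ kappa X} :
    psi X x = (⟨imp x x, h⟩, a, true) := by
  have hnG : x ∉ Gs (imp x x) := fun hG => (hG.2 hKI) ⟨a, ha, hax⟩
  have hcx : compl x = imp a (imp x x) := by
    have h0 := dot_compl hinv (u := imp x x) (a := a)
    rw [hax] at h0
    exact h0
  unfold psi gam
  rw [if_neg hnG, if_neg hnG, hcx, H_recover hinv hoe hKI ha]

theorem rep_cases (x : X) :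
    (psi X x = (⟨imp x x, impself_kappa x⟩, x, false) ∧ x ∈ Gs (imp x x) ∧ gam x = x) ∨
    (inKI (imp x x) ∧ ∃ a, a ∈ Hs (imp x x) ∧ a * compl (imp x x) = x ∧
      psi X x = (⟨imp x x, impself_kappa x⟩, a, true) ∧ gam x = a) := by
  rcases psi_dichotomy x with h | ⟨hKI, a, haH, hax⟩
  · exact Or.inl ⟨psi_eq_undot h, h, by unfold gam; rw [if_pos h]⟩
  · right
    have hpsi := psi_eq_dot hinv hoe hKI haH hax (h := impself_kappa x)
    exact ⟨hKI, a, haH, hax, hpsi, congrArg (fun p => p.2.1) hpsi⟩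

theorem psi_inj {x y : X} (h : psi X x = psi X y) : x = y := by
  have h1 : imp x x = imp y y := congrArg (fun p => p.1.val) h
  have h2 : gam x = gam y := congrArg (fun p => p.2.1) h
  rcases rep_cases hinv hoe x with ⟨hpx, hxG, hgx⟩ | ⟨hKIx, a, haH, hax, hpx, hgx⟩ <;>
    rcases rep_cases hinv hoe y with ⟨hpy, hyG, hgy⟩ | ⟨hKIy, b, hbH, hbx, hpy, hgy⟩
  · rw [← hgx, ← hgy, h2]
  · have := congrArg (fun p => p.2.2) h
    rw [hpx, hpy] at this
    exact absurd this (by simp)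
  · have := congrArg (fun p => p.2.2) h
    rw [hpx, hpy] at this
    exact absurd this (by simp)
  · rw [← hax, ← hbx, ← hgx, ← hgy, h2, h1]

-- bunch projection helpers
omit hinv hoe in
theorem bc_le {w : kappaT X} {a b : X} : (bunchOfChain X).le w a b ↔ a ≤ b := Iff.rfl

omit hinv hoe in
theorem rho_ge {w : kappaT X} {p : kappaT X × X × Bool} (h : w ≤ p.1) :
    (bunchOfChain X).rho w p = p := if_pos h

omit hinv hoe in
theorem rho_low {w : kappaT X} {p : kappaT X × X × Bool} (h : ¬ w ≤ p.1) :
    (bunchOfChain X).rho w p = (w, w.val * p.2.1, false) := by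
  unfold BunchData.rho
  rw [if_neg h]
  rfl

theorem v_mul_gam {x v : X} (hv : v ∈ kappa X) (hl : imp x x < v) :
    v * gam x = v * x := by
  rcases rep_cases hinv hoe x with ⟨_, _, hg⟩ | ⟨hKI, a, haH, hax, _, hg⟩
  · rw [hg]
  · rw [hg, ← hax]
    have h1 : v * compl (imp x x) = v :=
      mul_compl_kappa_lt hinv hoe (one_le_impself x) hv hl
    calc v * a = (v * compl (imp x x)) * a := by rw [h1]
      _ = v * (a * compl (imp x x)) := by
          simp only [mul_comm, mul_assoc, mul_left_comm]

theorem glt_iff_same {x y : X} (hxy : imp x x = imp y y) :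
    (bunchOfChain X).glt (psi X x) (psi X y) ↔
      (gam x < gam y ∨
        (gam x = gam y ∧ (psi X x).2.2 = true ∧ (psi X y).2.2 = false)) := by
  have hUV : (psi X x).1 = (psi X y).1 := Subtype.ext hxy
  unfold BunchData.glt
  rw [hUV, max_self, rho_ge (le_refl _), rho_ge hUV.ge]
  unfold BunchData.llt BunchData.lt
  constructor
  · rintro (h | ⟨_, hlt⟩)
    · rcases h with ⟨h1, h2⟩ | h
      · exact Or.inl (lt_of_le_of_ne h1 h2)
      · exact Or.inr h
    · exact absurd hlt (lt_irrefl _)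
  · rintro (h | h)
    · exact Or.inl (Or.inl ⟨h.le, h.ne⟩)
    · exact Or.inl (Or.inr h)

theorem glt_iff_low {x y : X} (h : imp x x < imp y y) :
    ((bunchOfChain X).glt (psi X x) (psi X y) ↔
      (imp y y * x < gam y ∨ (imp y y * x = gam y ∧ (psi X y).2.2 = false))) ∧
    ((bunchOfChain X).glt (psi X y) (psi X x) ↔
      (gam y < imp y y * x ∨ (gam y = imp y y * x ∧ (psi X y).2.2 = true))) := by
  have hUV : (psi X x).1 ≤ (psi X y).1 := Subtype.coe_le_coe.mp h.le
  have hUVlt : (psi X x).1 < (psi X y).1 := Subtype.coe_lt_coe.mp h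
  have hnot : ¬ (psi X y).1 ≤ (psi X x).1 := not_le_of_gt hUVlt
  have hmax1 : max (psi X x).1 (psi X y).1 = (psi X y).1 := max_eq_right hUV
  have hmax2 : max (psi X y).1 (psi X x).1 = (psi X y).1 := max_eq_left hUV
  have hrho : (bunchOfChain X).rho (psi X y).1 (psi X x) =
      ((psi X y).1, imp y y * x, false) := by
    rw [rho_low hnot]
    show ((psi X y).1, imp y y * gam x, false) = _
    rw [v_mul_gam hinv hoe (impself_kappa y) h]
  constructor
  · unfold BunchData.glt
    rw [hmax1, hrho, rho_ge (le_refl _)]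
    unfold BunchData.llt BunchData.lt
    constructor
    · rintro (h' | ⟨heq, _⟩)
      · rcases h' with ⟨h1, h2⟩ | ⟨_, h2, _⟩
        · exact Or.inl (lt_of_le_of_ne h1 h2)
        · exact absurd h2 (by simp)
      · exact Or.inr ⟨congrArg (fun p => p.2.1) heq,
          (congrArg (fun p => p.2.2) heq).symm⟩
    · rintro (h' | ⟨h1, h2⟩)
      · exact Or.inl (Or.inl ⟨h'.le, h'.ne⟩)
      · right
        refine ⟨?_, hUVlt⟩
        have hy : psi X y = ((psi X y).1, gam y, (psi X y).2.2) := rfl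
        rw [hy, ← h1, h2]
  · unfold BunchData.glt
    rw [hmax2, hrho, rho_ge (le_refl _)]
    unfold BunchData.llt BunchData.lt
    constructor
    · rintro (h' | ⟨_, hlt⟩)
      · rcases h' with ⟨h1, h2⟩ | ⟨h1, h2, _⟩
        · exact Or.inl (lt_of_le_of_ne h1 h2)
        · exact Or.inr ⟨h1, h2⟩
      · exact absurd hlt (not_lt_of_ge hUV)
    · rintro (h' | ⟨h1, h2⟩)
      · exact Or.inl (Or.inl ⟨h'.le, h'.ne⟩)
      · exact Or.inl (Or.inr ⟨h1, h2, rfl⟩)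

theorem lt_sem_same {x y : X} (hxy : imp x x = imp y y) :
    x < y ↔ (gam x < gam y ∨
      (gam x = gam y ∧ (psi X x).2.2 = true ∧ (psi X y).2.2 = false)) := by
  rcases rep_cases hinv hoe x with ⟨hpx, hxG, hgx⟩ | ⟨hKIx, a, haH, hax, hpx, hgx⟩ <;>
    rcases rep_cases hinv hoe y with ⟨hpy, hyG, hgy⟩ | ⟨hKIy, b, hbH, hbx, hpy, hgy⟩
  · simp only [hpx, hpy, hgx, hgy, Bool.false_eq_true, Bool.true_eq_false, false_and,
      and_false, and_true, true_and, or_false, false_or]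
  · have hyb : y < b := by rw [← hbx]; exact hbH.2
    have hKIx' : inKI (imp x x) := by rw [hxy]; exact hKIy
    have hne : x ≠ y := by
      intro he
      apply hxG.2 hKIx'
      have hmem : x ∈ dotH (imp x x) := by
        rw [hxy, he]
        exact ⟨b, hbH, hbx⟩
      exact hmem
    simp only [hpx, hpy, hgx, hgy, Bool.false_eq_true, Bool.true_eq_false, false_and,
      and_false, and_true, true_and, or_false, false_or]
    constructor
    · intro hlt; exact lt_trans hlt hyb
    · intro hl
      have hle : x ≤ b * compl (imp y y) := dot_cover hinv hoe hbH hxy hl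
      rw [hbx] at hle
      exact lt_of_le_of_ne hle hne
  · have hxa : x < a := by rw [← hax]; exact haH.2
    simp only [hpx, hpy, hgx, hgy, Bool.false_eq_true, Bool.true_eq_false, false_and,
      and_false, and_true, true_and, or_false, false_or]
    constructor
    · intro hlt
      have hay : a ≤ y := by
        by_contra hc
        push_neg at hc
        have h2 : y ≤ a * compl (imp x x) := dot_cover hinv hoe haH hxy.symm hc
        rw [hax] at h2
        exact absurd hlt (not_lt_of_ge h2)
      exact hay.lt_or_eq
    · rintro (hl | he)
      · exact lt_trans hxa hl
      · exact he ▸ hxa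
  · have hxa : x < a := by rw [← hax]; exact haH.2
    simp only [hpx, hpy, hgx, hgy, Bool.false_eq_true, Bool.true_eq_false, false_and,
      and_false, and_true, true_and, or_false, false_or]
    constructor
    · intro hlt
      rcases lt_trichotomy a b with h' | h' | h'
      · exact h'
      · exfalso
        have : x = y := by rw [← hax, ← hbx, h', hxy]
        exact absurd (this ▸ hlt) (lt_irrefl x)
      · exfalso
        have hbl : imp b b = imp x x := by rw [hbH.1, hxy]
        have h2 : b ≤ a * compl (imp x x) := dot_cover hinv hoe haH hbl h'
        rw [hax] at h2
        have hyb : y < b := by rw [← hbx]; exact hbH.2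
        exact absurd (lt_trans hyb (lt_of_le_of_lt h2 hlt)) (lt_irrefl y)
    · intro hl
      have hal : imp a a = imp y y := by rw [haH.1, hxy]
      have h2 : a ≤ b * compl (imp y y) := dot_cover hinv hoe hbH hal hl
      rw [hbx] at h2
      exact lt_of_lt_of_le hxa h2

theorem lt_sem_low {x y : X} (h : imp x x < imp y y) :
    (x < y ↔ (imp y y * x < gam y ∨ (imp y y * x = gam y ∧ (psi X y).2.2 = false))) ∧
    (y < x ↔ (gam y < imp y y * x ∨ (gam y = imp y y * x ∧ (psi X y).2.2 = true))) := by
  have hvk : imp y y ∈ kappa X := impself_kappa y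
  have hcH : imp y y * x ∈ Hs (imp y y) := trans_mem_H hinv hoe rfl hvk h
  have hxc : x ≤ imp y y * x := le_mul_self hvk.1
  have hvy : imp y y * y = y := stab_layer rfl
  have hne : x ≠ y := fun he => (ne_of_lt h) (by rw [he])
  rcases rep_cases hinv hoe y with ⟨hpy, hyG, hgy⟩ | ⟨hKIy, b, hbH, hbx, hpy, hgy⟩
  · simp only [hpy, hgy, Bool.false_eq_true, Bool.true_eq_false, false_and,
      and_false, and_true, true_and, or_false, false_or]
    constructor
    · constructor
      · intro hlt
        have h2 : imp y y * x ≤ y := by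
          have h3 := mul_le_mul_left3 (imp y y) hlt.le
          rwa [hvy] at h3
        exact h2.lt_or_eq
      · rintro (hl | he)
        · exact lt_of_le_of_ne (le_trans hxc hl.le) hne
        · exact lt_of_le_of_ne (he ▸ hxc) hne
    · constructor
      · intro hlt
        exact lt_of_lt_of_le hlt hxc
      · intro hl
        refine lt_of_not_ge fun hc => ?_
        have h2 : imp y y * x ≤ y := by
          have h3 := mul_le_mul_left3 (imp y y) hc
          rwa [hvy] at h3
        exact absurd (lt_of_lt_of_le hl h2) (lt_irrefl y)
  · have hyb : y < b := by rw [← hbx]; exact hbH.2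
    simp only [hpy, hgy, Bool.false_eq_true, Bool.true_eq_false, false_and,
      and_false, and_true, true_and, or_false, false_or]
    constructor
    · constructor
      · intro hlt
        have hcy : imp y y * x ≤ y := by
          have h3 := mul_le_mul_left3 (imp y y) hlt.le
          rwa [hvy] at h3
        exact lt_of_le_of_lt hcy hyb
      · intro hl
        have h2 : imp y y * x ≤ b * compl (imp y y) := dot_cover hinv hoe hbH hcH.1 hl
        rw [hbx] at h2
        exact lt_of_le_of_ne (le_trans hxc h2) hne
    · constructor
      · intro hlt
        have hbc : b ≤ imp y y * x := by
          by_contra hc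
          push_neg at hc
          have h2 : imp y y * x ≤ b * compl (imp y y) := dot_cover hinv hoe hbH hcH.1 hc
          rw [hbx] at h2
          exact absurd (lt_of_le_of_lt hxc (lt_of_le_of_lt h2 hlt)) (lt_irrefl x)
        exact hbc.lt_or_eq
      · rintro (hl | he)
        · refine lt_of_not_ge fun hc => ?_
          have h2 : imp y y * x ≤ y := by
            have h3 := mul_le_mul_left3 (imp y y) hc
            rwa [hvy] at h3
          exact absurd hl (not_lt_of_ge (le_trans h2 hyb.le))
        · refine lt_of_not_ge fun hc => ?_
          have h2 : imp y y * x ≤ y := by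
            have h3 := mul_le_mul_left3 (imp y y) hc
            rwa [hvy] at h3
          rw [← he] at h2
          exact absurd (lt_of_le_of_lt h2 hyb) (lt_irrefl b)

theorem lt_iff_glt (x y : X) :
    x < y ↔ (bunchOfChain X).glt (psi X x) (psi X y) := by
  rcases lt_trichotomy (imp x x) (imp y y) with h | h | h
  · rw [(glt_iff_low hinv hoe h).1]
    exact (lt_sem_low hinv hoe h).1
  · rw [glt_iff_same hinv hoe h]
    exact lt_sem_same hinv hoe h
  · rw [(glt_iff_low hinv hoe (x := y) (y := x) h).2]
    exact (lt_sem_low hinv hoe (x := y) (y := x) h).2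

theorem le_iff_gle (x y : X) :
    x ≤ y ↔ (bunchOfChain X).gle (psi X x) (psi X y) := by
  rw [le_iff_lt_or_eq]
  unfold BunchData.gle
  constructor
  · rintro (h | h)
    · exact Or.inl ((lt_iff_glt hinv hoe x y).mp h)
    · exact Or.inr (by rw [h])
  · rintro (h | h)
    · exact Or.inl ((lt_iff_glt hinv hoe x y).mpr h)
    · exact Or.inr (psi_inj hinv hoe h)

omit hinv hoe in
theorem triple_ext {u v : X} {hu : u ∈ kappa X} {hv : v ∈ kappa X} {a b : X} {c d : Bool}
    (h1 : u = v) (h2 : a = b) (h3 : c = d) :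
    ((⟨u, hu⟩ : kappaT X), a, c) = ((⟨v, hv⟩ : kappaT X), b, d) := by
  subst h1; subst h2; subst h3; rfl

omit hinv hoe in
theorem star_out_pos {w : kappaT X} {p q : kappaT X × X × Bool}
    (h : inKI w.val ∧ gmul w.val p.2.1 q.2.1 ∈ Hs w.val ∧
      ¬(p.2.1 ∈ Hs w.val ∧ p.2.2 = false ∧ q.2.1 ∈ Hs w.val ∧ q.2.2 = false)) :
    (bunchOfChain X).star w p q = (w, gmul w.val p.2.1 q.2.1, true) := if_pos h

omit hinv hoe in
theorem star_out_neg {w : kappaT X} {p q : kappaT X × X × Bool}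
    (h : ¬(inKI w.val ∧ gmul w.val p.2.1 q.2.1 ∈ Hs w.val ∧
      ¬(p.2.1 ∈ Hs w.val ∧ p.2.2 = false ∧ q.2.1 ∈ Hs w.val ∧ q.2.2 = false))) :
    (bunchOfChain X).star w p q = (w, gmul w.val p.2.1 q.2.1, false) := if_neg h

omit hinv hoe in
theorem gmul_KI {v : X} (hKI : inKI v) (a b : X) :
    gmul v a b = imp (imp (a * b) v) v := if_pos hKI

omit hinv hoe in
theorem gmul_nKI {v : X} (hKI : ¬ inKI v) (a b : X) :
    gmul v a b = a * b := if_neg hKI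

omit hinv hoe in
theorem gmulB_comm (p q : kappaT X × X × Bool) :
    (bunchOfChain X).gmulB p q = (bunchOfChain X).gmulB q p := by
  unfold BunchData.gmulB
  rw [max_comm]
  generalize (bunchOfChain X).rho (max q.1 p.1) p = P
  generalize (bunchOfChain X).rho (max q.1 p.1) q = Q
  unfold BunchData.star
  have hm : (bunchOfChain X).mul (max q.1 p.1) P.2.1 Q.2.1 =
      (bunchOfChain X).mul (max q.1 p.1) Q.2.1 P.2.1 := by
    show gmul _ _ _ = gmul _ _ _
    unfold gmul
    rw [mul_comm P.2.1 Q.2.1]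
  rw [hm]
  refine if_congr ?_ rfl rfl
  constructor
  · rintro ⟨h1, h2, h3⟩
    exact ⟨h1, h2, fun ⟨a, b, c, d⟩ => h3 ⟨c, d, a, b⟩⟩
  · rintro ⟨h1, h2, h3⟩
    exact ⟨h1, h2, fun ⟨a, b, c, d⟩ => h3 ⟨c, d, a, b⟩⟩

theorem star_absorb_out {u : X} (hKI : inKI u) {z : X} (hzl : imp z z = u)
    (hA : z * compl u = z) :
    (imp (imp z u) u = z ∧ z ∉ Hs u ∧ z ∉ dotH u) ∨
    (∃ cc, cc ∈ Hs u ∧ cc * compl u = z ∧ imp (imp z u) u = cc) := by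
  have hznH : z ∉ Hs u := by
    intro hH
    have h2 := hH.2
    rw [hA] at h2
    exact lt_irrefl z h2
  by_cases hd : z ∈ dotH u
  · right
    obtain ⟨cc, hcc, hccz⟩ := hd
    refine ⟨cc, hcc, hccz, ?_⟩
    rw [← show cc * compl u = z from hccz]
    exact cl_dot hinv hoe hKI hcc
  · exact Or.inl ⟨cl_A hinv hoe hKI hzl hA hd, hznH, hd⟩

theorem psi_out_undot {z v : X} (hzl : imp z z = v) (hG : z ∈ Gs v) (hv : v ∈ kappa X) :
    psi X z = (⟨v, hv⟩, z, false) := by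
  subst hzl
  exact psi_eq_undot hG

theorem psi_out_dot {z v a : X} (hzl : imp z z = v) (hKI : inKI v) (ha : a ∈ Hs v)
    (haz : a * compl v = z) (hv : v ∈ kappa X) :
    psi X z = (⟨v, hv⟩, a, true) := by
  subst hzl
  exact psi_eq_dot hinv hoe hKI ha haz

theorem G_not_H_absorb {v x : X} (hKI : inKI v) (hG : x ∈ Gs v) (hnH : x ∉ Hs v) :
    x * compl v = x := by
  rcases mem_G_cases hKI hG hKI.1.1 (f_le_one hoe) with h | h
  · exact absurd h hnH
  · exact h.1

/-- The master star computation within a layer. -/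
theorem star_psi_core {v a b z : X} {da db : Bool} {P Q : kappaT X} (hv : v ∈ kappa X)
    (hKI : inKI v) (haG : a ∈ Gs v) (hbG : b ∈ Gs v)
    (hz1 : (a ∈ Hs v ∧ b ∈ Hs v ∧ da = false ∧ db = false) → z = a * b)
    (hz2 : (a ∈ Hs v ∧ b ∈ Hs v ∧ ¬(da = false ∧ db = false)) → z = (a * b) * compl v)
    (hz3 : ¬(a ∈ Hs v ∧ b ∈ Hs v) → (z = a * b ∧ z * compl v = z)) :
    psi X z = (bunchOfChain X).star (⟨v, hv⟩ : kappaT X) (P, a, da) (Q, b, db) := by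
  by_cases hab : a ∈ Hs v ∧ b ∈ Hs v
  · have hmH : a * b ∈ Hs v := HmulH hinv hoe hKI hab.1 hab.2
    have hm : gmul v a b = a * b := by
      rw [gmul_KI hKI]
      exact H_recover hinv hoe hKI hmH
    by_cases hdd : da = false ∧ db = false
    · rw [star_out_neg (fun h => h.2.2 ⟨hab.1, hdd.1, hab.2, hdd.2⟩)]
      rw [hm, hz1 ⟨hab.1, hab.2, hdd.1, hdd.2⟩]
      exact psi_out_undot hinv hoe hmH.1 (H_sub_G hKI hmH) hv
    · rw [star_out_pos ⟨hKI, by rw [show gmul v a b = a * b from hm]; exact hmH,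
        fun ⟨_, h2, _, h4⟩ => hdd ⟨h2, h4⟩⟩]
      rw [hm, hz2 ⟨hab.1, hab.2, hdd⟩]
      exact psi_out_dot hinv hoe (dot_layer hinv hoe hKI hmH.1) hKI hmH rfl hv
  · obtain ⟨hz3a, hz3b⟩ := hz3 hab
    have hzl : imp z z = v := by
      rw [hz3a, layer_mul hinv hoe, haG.1, hbG.1, max_self]
    have hg0 : gmul v a b = imp (imp z v) v := by
      rw [gmul_KI hKI, ← hz3a]
    have h3 : ¬(a ∈ Hs v ∧ da = false ∧ b ∈ Hs v ∧ db = false) :=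
      fun ⟨h1, _, h2, _⟩ => hab ⟨h1, h2⟩
    rcases star_absorb_out hinv hoe hKI hzl hz3b with ⟨hclz, hznH, hznd⟩ |
      ⟨cc, hccH, hccz, hcl⟩
    · rw [star_out_neg (fun h => hznH (by
        rw [show gmul v a b = z from hg0.trans hclz] at h; exact h.2.1))]
      rw [show gmul v a b = z from hg0.trans hclz]
      exact psi_out_undot hinv hoe hzl ⟨hzl, fun _ => hznd⟩ hv
    · rw [star_out_pos ⟨hKI, by rw [show gmul v a b = cc from hg0.trans hcl]; exact hccH, h3⟩]
      rw [show gmul v a b = cc from hg0.trans hcl]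
      exact psi_out_dot hinv hoe hzl hKI hccH hccz hv

theorem psi_mul_same {x y : X} (hxy : imp x x = imp y y) :
    psi X (x * y) = (bunchOfChain X).gmulB (psi X x) (psi X y) := by
  have hUV : (psi X x).1 = (psi X y).1 := Subtype.ext hxy
  have hg : (bunchOfChain X).gmulB (psi X x) (psi X y) =
      (bunchOfChain X).star (psi X y).1 (psi X x) (psi X y) := by
    unfold BunchData.gmulB
    rw [hUV, max_self, rho_ge (le_refl _), rho_ge hUV.ge]
  rw [hg]
  have hv : imp y y ∈ kappa X := impself_kappa y
  have hzl : imp (x * y) (x * y) = imp y y := by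
    rw [layer_mul hinv hoe, hxy, max_self]
  by_cases hKI : inKI (imp y y)
  · rcases rep_cases hinv hoe x with ⟨hpx, hxG, _⟩ | ⟨hKIx, a, haH, hax, hpx, _⟩ <;>
      rcases rep_cases hinv hoe y with ⟨hpy, hyG, _⟩ | ⟨hKIy, b, hbH, hbx, hpy, _⟩
    · simp only [hpx, hpy]
      refine star_psi_core hinv hoe hv hKI (hxy ▸ hxG) hyG ?_ ?_ ?_
      · exact fun _ => rfl
      · exact fun h2 => absurd ⟨rfl, rfl⟩ h2.2.2
      · intro hab
        refine ⟨rfl, ?_⟩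
        rcases not_and_or.mp hab with hnx | hny
        · have hax' : x * compl (imp y y) = x :=
            G_not_H_absorb hinv hoe hKI (hxy ▸ hxG) hnx
          calc (x * y) * compl (imp y y) = (x * compl (imp y y)) * y := by
                simp only [mul_comm, mul_assoc, mul_left_comm]
            _ = x * y := by rw [hax']
        · have hay' : y * compl (imp y y) = y := G_not_H_absorb hinv hoe hKI hyG hny
          calc (x * y) * compl (imp y y) = x * (y * compl (imp y y)) := mul_assoc _ _ _
            _ = x * y := by rw [hay']
    · simp only [hpx, hpy]
      refine star_psi_core hinv hoe hv hKI (hxy ▸ hxG) (H_sub_G hKI hbH) ?_ ?_ ?_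
      · exact fun h1 => absurd h1.2.2.2 (by simp)
      · intro _
        calc x * y = x * (b * compl (imp y y)) := by rw [hbx]
          _ = (x * b) * compl (imp y y) := (mul_assoc _ _ _).symm
      · intro hab
        have hnx : x ∉ Hs (imp y y) := fun hx => hab ⟨hx, hbH⟩
        have hax' : x * compl (imp y y) = x :=
          G_not_H_absorb hinv hoe hKI (hxy ▸ hxG) hnx
        have h1 : x * y = x * b := by
          calc x * y = x * (b * compl (imp y y)) := by rw [hbx]
            _ = (x * compl (imp y y)) * b := by
                simp only [mul_comm, mul_assoc, mul_left_comm]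
            _ = x * b := by rw [hax']
        refine ⟨h1, ?_⟩
        rw [h1]
        calc (x * b) * compl (imp y y) = (x * compl (imp y y)) * b := by
              simp only [mul_comm, mul_assoc, mul_left_comm]
          _ = x * b := by rw [hax']
    · simp only [hpx, hpy]
      have haH' : a ∈ Hs (imp y y) := hxy ▸ haH
      have hax' : a * compl (imp y y) = x := by rw [← hxy]; exact hax
      refine star_psi_core hinv hoe hv hKI (H_sub_G hKI haH') hyG ?_ ?_ ?_
      · exact fun h1 => absurd h1.2.2.1 (by simp)
      · intro _
        calc x * y = (a * compl (imp y y)) * y := by rw [hax']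
          _ = (a * y) * compl (imp y y) := by
              simp only [mul_comm, mul_assoc, mul_left_comm]
      · intro hab
        have hny : y ∉ Hs (imp y y) := fun hy => hab ⟨haH', hy⟩
        have hay' : y * compl (imp y y) = y := G_not_H_absorb hinv hoe hKI hyG hny
        have h1 : x * y = a * y := by
          calc x * y = (a * compl (imp y y)) * y := by rw [hax']
            _ = a * (y * compl (imp y y)) := by
                simp only [mul_comm, mul_assoc, mul_left_comm]
            _ = a * y := by rw [hay']
        refine ⟨h1, ?_⟩
        rw [h1]
        calc (a * y) * compl (imp y y) = a * (y * compl (imp y y)) := mul_assoc _ _ _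
          _ = a * y := by rw [hay']
    · simp only [hpx, hpy]
      have haH' : a ∈ Hs (imp y y) := hxy ▸ haH
      have hax' : a * compl (imp y y) = x := by rw [← hxy]; exact hax
      refine star_psi_core hinv hoe hv hKI (H_sub_G hKI haH') (H_sub_G hKI hbH) ?_ ?_ ?_
      · exact fun h1 => absurd h1.2.2.1 (by simp)
      · intro _
        calc x * y = (a * compl (imp y y)) * (b * compl (imp y y)) := by rw [hax', hbx]
          _ = (a * b) * (compl (imp y y) * compl (imp y y)) := by
              simp only [mul_comm, mul_assoc, mul_left_comm]
          _ = (a * b) * compl (imp y y) := by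
              rw [show compl (imp y y) * compl (imp y y) = compl (imp y y) from hKI.2.1]
      · exact fun hab => absurd ⟨haH', hbH⟩ hab
  · rcases rep_cases hinv hoe x with ⟨hpx, hxG, _⟩ | ⟨hKIx, _, _, _, _, _⟩
    · rcases rep_cases hinv hoe y with ⟨hpy, hyG, _⟩ | ⟨hKIy, _, _, _, _, _⟩
      · simp only [hpx, hpy]
        rw [star_out_neg (fun hcond => hKI hcond.1)]
        rw [gmul_nKI hKI]
        exact psi_out_undot hinv hoe hzl ⟨hzl, fun hk => absurd hk hKI⟩ hv
      · exact absurd hKIy hKI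
    · exact absurd (hxy ▸ hKIx) hKI

theorem psi_mul_lt {x y : X} (h : imp x x < imp y y) :
    psi X (x * y) = (bunchOfChain X).gmulB (psi X x) (psi X y) := by
  have hv : imp y y ∈ kappa X := impself_kappa y
  have hUV : (psi X x).1 ≤ (psi X y).1 := Subtype.coe_le_coe.mp h.le
  have hnot : ¬ (psi X y).1 ≤ (psi X x).1 := not_le_of_gt (Subtype.coe_lt_coe.mp h)
  have hrho : (bunchOfChain X).rho (psi X y).1 (psi X x) =
      ((psi X y).1, imp y y * x, false) := by
    rw [rho_low hnot]
    show ((psi X y).1, imp y y * gam x, false) = _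
    rw [v_mul_gam hinv hoe hv h]
  have hg : (bunchOfChain X).gmulB (psi X x) (psi X y) =
      (bunchOfChain X).star (psi X y).1 ((psi X y).1, imp y y * x, false) (psi X y) := by
    unfold BunchData.gmulB
    rw [max_eq_right hUV, hrho, rho_ge (le_refl _)]
  rw [hg]
  have hxyl : imp (x * y) (x * y) = imp y y := by
    rw [layer_mul hinv hoe, max_eq_right h.le]
  have hstab : imp y y * (x * y) = x * y := stab_layer hxyl
  have hz1 : x * y = (imp y y * x) * y := by
    calc x * y = imp y y * (x * y) := hstab.symm
      _ = (imp y y * x) * y := (mul_assoc _ _ _).symm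
  have hcH : imp y y * x ∈ Hs (imp y y) := trans_mem_H hinv hoe rfl hv h
  by_cases hKI : inKI (imp y y)
  · rcases rep_cases hinv hoe y with ⟨hpy, hyG, _⟩ | ⟨hKIy, b, hbH, hbx, hpy, _⟩
    · simp only [hpy]
      refine star_psi_core hinv hoe hv hKI (H_sub_G hKI hcH) hyG ?_ ?_ ?_
      · exact fun _ => hz1
      · exact fun h2 => absurd ⟨rfl, rfl⟩ h2.2.2
      · intro hab
        have hny : y ∉ Hs (imp y y) := fun hy => hab ⟨hcH, hy⟩
        have hay : y * compl (imp y y) = y := G_not_H_absorb hinv hoe hKI hyG hny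
        refine ⟨hz1, ?_⟩
        calc (x * y) * compl (imp y y) = x * (y * compl (imp y y)) := mul_assoc _ _ _
          _ = x * y := by rw [hay]
    · simp only [hpy]
      refine star_psi_core hinv hoe hv hKI (H_sub_G hKI hcH) (H_sub_G hKI hbH) ?_ ?_ ?_
      · exact fun h1 => absurd h1.2.2.2 (by simp)
      · intro _
        calc x * y = imp y y * (x * y) := hstab.symm
          _ = imp y y * (x * (b * compl (imp y y))) := by rw [hbx]
          _ = ((imp y y * x) * b) * compl (imp y y) := by
              simp only [mul_comm, mul_assoc, mul_left_comm]
      · exact fun hab => absurd ⟨hcH, hbH⟩ hab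
  · rcases rep_cases hinv hoe y with ⟨hpy, hyG, _⟩ | ⟨hKIy, _, _, _, _, _⟩
    · simp only [hpy]
      rw [star_out_neg (fun hcond => hKI hcond.1)]
      rw [gmul_nKI hKI]
      rw [← hz1]
      exact psi_out_undot hinv hoe hxyl ⟨hxyl, fun hk => absurd hk hKI⟩ hv
    · exact absurd hKIy hKI

theorem psi_mul (x y : X) :
    psi X (x * y) = (bunchOfChain X).gmulB (psi X x) (psi X y) := by
  rcases lt_trichotomy (imp x x) (imp y y) with h | h | h
  · exact psi_mul_lt hinv hoe h
  · exact psi_mul_same hinv hoe h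
  · rw [mul_comm x y, gmulB_comm]
    exact psi_mul_lt hinv hoe h

omit hinv hoe in
theorem negB_eval1 {p : kappaT X × X × Bool} (h1 : inKI p.1.val ∧ p.2.2 = true) :
    (bunchOfChain X).negB p = (p.1, imp p.2.1 p.1.val, false) := if_pos h1

omit hinv hoe in
theorem negB_eval2 {p : kappaT X × X × Bool} (h1 : ¬(inKI p.1.val ∧ p.2.2 = true))
    (h2 : inKI p.1.val ∧ p.2.1 ∈ Hs p.1.val) :
    (bunchOfChain X).negB p = (p.1, imp p.2.1 p.1.val, true) :=
  (if_neg h1).trans (if_pos h2)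

omit hinv hoe in
theorem negB_eval3 {p : kappaT X × X × Bool} (h1 : ¬(inKI p.1.val ∧ p.2.2 = true))
    (h2 : ¬(inKI p.1.val ∧ p.2.1 ∈ Hs p.1.val)) (h3 : inKJ p.1.val) :
    (bunchOfChain X).negB p =
      (p.1, (bunchOfChain X).lowerCoverFn p.1 (imp p.2.1 p.1.val), false) :=
  ((if_neg h1).trans (if_neg h2)).trans (if_pos h3)

omit hinv hoe in
theorem negB_eval4 {p : kappaT X × X × Bool} (h1 : ¬(inKI p.1.val ∧ p.2.2 = true))
    (h2 : ¬(inKI p.1.val ∧ p.2.1 ∈ Hs p.1.val)) (h3 : ¬ inKJ p.1.val) :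
    (bunchOfChain X).negB p = (p.1, imp p.2.1 p.1.val, false) :=
  ((if_neg h1).trans (if_neg h2)).trans (if_neg h3)

theorem lcFn_eq {u : X} (hu : u ∈ kappa X) (hJ : ¬ IsIdem (compl u)) {z : X}
    (hz : imp z z = u) :
    (bunchOfChain X).lowerCoverFn ⟨u, hu⟩ (imp z u) = compl z := by
  obtain ⟨hl1, hl2, hl3⟩ := KJ_compl_lower hinv hoe hu hJ hz
  have hnKI : ¬ inKI u := fun hk => hJ hk.2.1
  have hGall : ∀ w : X, w ∈ Gs u ↔ imp w w = u := fun w =>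
    ⟨fun hw => hw.1, fun hw => ⟨hw, fun hk => absurd hk hnKI⟩⟩
  have hcov : (bunchOfChain X).IsLowerCoverIn ⟨u, hu⟩ (compl z) (imp z u) := by
    refine ⟨(hGall _).mpr hl1, ⟨hl2.le, hl2.ne⟩, ?_⟩
    intro w hw hlt
    exact hl3 w ((hGall _).mp hw) (lt_of_le_of_ne hlt.1 hlt.2)
  have hex : ∃ p, (bunchOfChain X).IsLowerCoverIn ⟨u, hu⟩ p (imp z u) := ⟨_, hcov⟩
  have hspec : (bunchOfChain X).IsLowerCoverIn ⟨u, hu⟩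
      ((bunchOfChain X).lowerCoverFn ⟨u, hu⟩ (imp z u)) (imp z u) :=
    Classical.epsilon_spec hex
  have hle1 : (bunchOfChain X).lowerCoverFn ⟨u, hu⟩ (imp z u) ≤ compl z :=
    hcov.2.2 _ hspec.1 hspec.2.1
  have hle2 : compl z ≤ (bunchOfChain X).lowerCoverFn ⟨u, hu⟩ (imp z u) :=
    hspec.2.2 _ hcov.1 hcov.2.1
  exact le_antisymm hle1 hle2

theorem psi_compl (z : X) :
    psi X (compl z) = (bunchOfChain X).negB (psi X z) := by
  have hcl : imp (compl z) (compl z) = imp z z := layer_compl hinv z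
  have hv : imp z z ∈ kappa X := impself_kappa z
  rcases rep_cases hinv hoe z with ⟨hpz, hzG, _⟩ | ⟨hKIz, a, haH, haz, hpz, _⟩
  · by_cases hKI : inKI (imp z z)
    · rcases mem_G_cases hKI hzG hv.1 (f_le_one hoe) with hzH | ⟨hA, hnd⟩
      · rw [hpz, negB_eval2 (p := (⟨imp z z, impself_kappa z⟩, z, false))
          (fun hc => absurd hc.2 (by simp)) ⟨hKI, hzH⟩]
        exact psi_out_dot hinv hoe hcl hKI (inv_mem_H hinv hoe hKI hzH)
          (compl_H_dot hinv hoe hKI hzH).symm hv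
      · have hznH : z ∉ Hs (imp z z) := by
          intro hH
          have h2 := hH.2
          rw [hA] at h2
          exact lt_irrefl z h2
        rw [hpz, negB_eval4 (p := (⟨imp z z, impself_kappa z⟩, z, false))
          (fun hc => absurd hc.2 (by simp)) (fun hc => hznH hc.2)
          (fun hc => hc.2 hKI.2.1)]
        have hval : imp z (imp z z) = compl z := by
          rw [imp_eq_compl hinv z (imp z z), hA]
        rw [show ((⟨imp z z, impself_kappa z⟩ : kappaT X), imp z (imp z z), false) =
          ((⟨imp z z, impself_kappa z⟩ : kappaT X), compl z, false) by rw [hval]]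
        exact psi_out_undot hinv hoe hcl
          ⟨hcl, fun _ => (absorber_compl hinv hoe hKI rfl hA hnd).2⟩ hv
    · by_cases hKJ : inKJ (imp z z)
      · rw [hpz, negB_eval3 (p := (⟨imp z z, impself_kappa z⟩, z, false))
          (fun hc => hKI hc.1) (fun hc => hKI hc.1) hKJ]
        rw [show (bunchOfChain X).lowerCoverFn ⟨imp z z, impself_kappa z⟩
            (imp z (imp z z)) = compl z from lcFn_eq hinv hoe _ hKJ.2 rfl]
        exact psi_out_undot hinv hoe hcl ⟨hcl, fun hk => absurd hk hKI⟩ hv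
      · have hidem : IsIdem (compl (imp z z)) := by
          by_contra hc
          exact hKJ ⟨hv, hc⟩
        have hko : imp z z ∈ kappaO X := by
          by_contra hc
          exact hKI ⟨hv, hidem, hc⟩
        have hfc : fc X = 1 := by
          rw [← compl_one]
          exact hko.2
        have hu1 : imp z z = 1 := hko.1
        rw [hpz, negB_eval4 (p := (⟨imp z z, impself_kappa z⟩, z, false))
          (fun hc => hKI hc.1) (fun hc => hKI hc.1) hKJ]
        have hval : imp z (imp z z) = compl z := by
          unfold compl
          rw [hu1, hfc]
        rw [show ((⟨imp z z, impself_kappa z⟩ : kappaT X), imp z (imp z z), false) =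
          ((⟨imp z z, impself_kappa z⟩ : kappaT X), compl z, false) by rw [hval]]
        exact psi_out_undot hinv hoe hcl ⟨hcl, fun hk => absurd hk hKI⟩ hv
  · rw [hpz, negB_eval1 (p := (⟨imp z z, impself_kappa z⟩, a, true)) ⟨hKIz, rfl⟩]
    have hzl : imp z z = imp z z := rfl
    have hval : compl z = imp a (imp z z) := by
      have h0 := dot_compl hinv (u := imp z z) (a := a)
      rw [haz] at h0
      exact h0
    rw [show ((⟨imp z z, impself_kappa z⟩ : kappaT X), imp a (imp z z), false) =
      ((⟨imp z z, impself_kappa z⟩ : kappaT X), compl z, false) by rw [hval]]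
    have hcH : compl z ∈ Hs (imp z z) := by
      rw [hval]
      exact inv_mem_H hinv hoe hKIz haH
    exact psi_out_undot hinv hoe hcl (H_sub_G hKIz hcH) hv

theorem psi_imp (x y : X) :
    psi X (imp x y) = (bunchOfChain X).impB (psi X x) (psi X y) := by
  unfold BunchData.impB
  rw [← psi_compl hinv hoe y, ← psi_mul hinv hoe, ← psi_compl hinv hoe]
  rw [imp_eq_compl hinv x y]

theorem psi_one : psi X (1 : X) = (bunchOfChain X).tB := by
  have h1 : imp (1 : X) 1 = 1 := one_imp 1
  have hG : (1 : X) ∈ Gs (imp (1 : X) 1) := by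
    refine ⟨rfl, fun hk hd => ?_⟩
    obtain ⟨a, haH, ha1⟩ := hd
    have ha1' : a * compl (imp (1 : X) 1) = 1 := ha1
    have idem : compl (imp (1 : X) 1) * compl (imp (1 : X) 1) = compl (imp (1 : X) 1) :=
      hk.2.1
    have h3 : compl (imp (1 : X) 1) = 1 := by
      calc compl (imp (1 : X) 1) = 1 * compl (imp (1 : X) 1) := (one_mul _).symm
        _ = (a * compl (imp (1 : X) 1)) * compl (imp (1 : X) 1) := by rw [ha1']
        _ = a * (compl (imp (1 : X) 1) * compl (imp (1 : X) 1)) := mul_assoc _ _ _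
        _ = a * compl (imp (1 : X) 1) := by rw [idem]
        _ = 1 := ha1'
    have hodd : OddChain X := by
      have h4 := h3
      rw [h1] at h4
      exact h4
    exact hk.2.2 ⟨h1, hodd⟩
  have h0 := psi_eq_undot (X := X) hG (h := impself_kappa 1)
  rw [h0]
  exact triple_ext h1 rfl rfl

theorem psi_fc : psi X (fc X) = (bunchOfChain X).fB := by
  rw [show (fc X) = compl 1 from compl_one.symm, psi_compl hinv hoe, psi_one hinv hoe]
  rfl

theorem psi_carrier (x : X) : psi X x ∈ (bunchOfChain X).carrier := by
  rcases rep_cases hinv hoe x with ⟨hpx, hxG, _⟩ | ⟨hKIx, a, haH, hax, hpx, _⟩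
  · rw [hpx]
    exact Or.inl ⟨rfl, hxG⟩
  · rw [hpx]
    exact Or.inr ⟨rfl, hKIx, haH⟩

theorem psi_unique {p : kappaT X × X × Bool} (hp : p ∈ (bunchOfChain X).carrier) :
    ∃! x : X, psi X x = p := by
  obtain ⟨w, z, b⟩ := p
  rcases hp with ⟨hb, hG⟩ | ⟨hb, hKI, hH⟩
  · simp only at hb hG
    subst hb
    have hpsiz : psi X z = (w, z, false) := by
      have h0 := psi_out_undot hinv hoe hG.1 hG w.2
      exact h0
    exact ⟨z, hpsiz, fun y hy => psi_inj hinv hoe (hy.trans hpsiz.symm)⟩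
  · simp only at hb hKI hH
    subst hb
    have hzl : imp (z * compl w.val) (z * compl w.val) = w.val :=
      dot_layer hinv hoe hKI hH.1
    have hpsix : psi X (z * compl w.val) = (w, z, true) :=
      psi_out_dot hinv hoe hzl hKI hH rfl w.2
    exact ⟨_, hpsix, fun y hy => psi_inj hinv hoe (hy.trans hpsix.symm)⟩

end PSI

end FLe

namespace BunchData

variable {K : Type u} {Λ : Type v} [LinearOrder K] {B : BunchData K Λ} (hB : B.IsBunch)

include hB

theorem unit_mul {u : K} {x : Λ} (hx : x ∈ B.G u) : B.mul u (B.unit u) x = x := by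
  rw [hB.mul_comm' u (B.unit u) (hB.unit_mem u) x hx]
  exact hB.mul_unit' u x hx

theorem inv_unit (u : K) : B.inv u (B.unit u) = B.unit u := by
  have h1 := hB.mul_inv' u (B.unit u) (hB.unit_mem u)
  have h2 := unit_mul hB (hB.inv_mem u (B.unit u) (hB.unit_mem u))
  rw [h2] at h1
  exact h1

theorem cancel {u : K} {x y z : Λ} (hx : x ∈ B.G u) (hy : y ∈ B.G u) (hz : z ∈ B.G u)
    (h : B.mul u x z = B.mul u y z) : x = y := by
  have hmx : B.mul u x z ∈ B.G u := hB.mul_mem u x hx z hz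
  have hiz : B.inv u z ∈ B.G u := hB.inv_mem u z hz
  calc x = B.mul u x (B.unit u) := (hB.mul_unit' u x hx).symm
    _ = B.mul u x (B.mul u z (B.inv u z)) := by rw [hB.mul_inv' u z hz]
    _ = B.mul u (B.mul u x z) (B.inv u z) := (hB.mul_assoc' u x hx z hz _ hiz).symm
    _ = B.mul u (B.mul u y z) (B.inv u z) := by rw [h]
    _ = B.mul u y (B.mul u z (B.inv u z)) := hB.mul_assoc' u y hy z hz _ hiz
    _ = B.mul u y (B.unit u) := by rw [hB.mul_inv' u z hz]
    _ = y := hB.mul_unit' u y hy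

theorem inv_invol {u : K} {x : Λ} (hx : x ∈ B.G u) : B.inv u (B.inv u x) = x := by
  have hix : B.inv u x ∈ B.G u := hB.inv_mem u x hx
  have h1 : B.mul u (B.inv u (B.inv u x)) (B.inv u x) = B.unit u := by
    rw [hB.mul_comm' u _ (hB.inv_mem u _ hix) _ hix]
    exact hB.mul_inv' u (B.inv u x) hix
  have h2 : B.mul u x (B.inv u x) = B.unit u := hB.mul_inv' u x hx
  exact cancel hB (hB.inv_mem u _ hix) hx hix (h1.trans h2.symm)

theorem inv_anti {u : K} {x y : Λ} (hx : x ∈ B.G u) (hy : y ∈ B.G u)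
    (h : B.le u x y) : B.le u (B.inv u y) (B.inv u x) := by
  have hix : B.inv u x ∈ B.G u := hB.inv_mem u x hx
  have hiy : B.inv u y ∈ B.G u := hB.inv_mem u y hy
  have hz : B.mul u (B.inv u x) (B.inv u y) ∈ B.G u := hB.mul_mem u _ hix _ hiy
  have h1 := hB.mul_le_mul' u x hx y hy _ hz h
  have e1 : B.mul u (B.mul u (B.inv u x) (B.inv u y)) x = B.inv u y := by
    calc B.mul u (B.mul u (B.inv u x) (B.inv u y)) x
        = B.mul u (B.mul u (B.inv u y) (B.inv u x)) x := by
          rw [hB.mul_comm' u _ hix _ hiy]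
      _ = B.mul u (B.inv u y) (B.mul u (B.inv u x) x) := hB.mul_assoc' u _ hiy _ hix x hx
      _ = B.mul u (B.inv u y) (B.mul u x (B.inv u x)) := by
          rw [hB.mul_comm' u _ hix x hx]
      _ = B.mul u (B.inv u y) (B.unit u) := by rw [hB.mul_inv' u x hx]
      _ = B.inv u y := hB.mul_unit' u _ hiy
  have e2 : B.mul u (B.mul u (B.inv u x) (B.inv u y)) y = B.inv u x := by
    calc B.mul u (B.mul u (B.inv u x) (B.inv u y)) y
        = B.mul u (B.inv u x) (B.mul u (B.inv u y) y) := hB.mul_assoc' u _ hix _ hiy y hy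
      _ = B.mul u (B.inv u x) (B.mul u y (B.inv u y)) := by
          rw [hB.mul_comm' u _ hiy y hy]
      _ = B.mul u (B.inv u x) (B.unit u) := by rw [hB.mul_inv' u y hy]
      _ = B.inv u x := hB.mul_unit' u _ hix
  rw [e1, e2] at h1
  exact h1

theorem inv_inj {u : K} {x y : Λ} (hx : x ∈ B.G u) (hy : y ∈ B.G u)
    (h : B.inv u x = B.inv u y) : x = y := by
  rw [← inv_invol hB hx, ← inv_invol hB hy, h]

theorem lc_unique {u : K} {p q y : Λ} (hp : B.IsLowerCoverIn u p y)
    (hq : B.IsLowerCoverIn u q y) : p = q :=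
  hB.le_antisymm' u p hp.1 q hq.1 (hq.2.2 p hp.1 hp.2.1) (hp.2.2 q hq.1 hq.2.1)

theorem lcFn_spec {u : K} (hKJ : u ∈ B.KJ) {y : Λ} (hy : y ∈ B.G u) :
    B.IsLowerCoverIn u (B.lowerCoverFn u y) y :=
  Classical.epsilon_spec (hB.g3_disc u hKJ y hy).1

theorem lcFn_eqB {u : K} (hKJ : u ∈ B.KJ) {p y : Λ} (hy : y ∈ B.G u)
    (hp : B.IsLowerCoverIn u p y) : B.lowerCoverFn u y = p :=
  lc_unique hB (lcFn_spec hB hKJ hy) hp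

theorem lc_translate {u : K} {x p y : Λ} (hx : x ∈ B.G u) (hy : y ∈ B.G u)
    (hp : B.IsLowerCoverIn u p y) :
    B.IsLowerCoverIn u (B.mul u x p) (B.mul u x y) := by
  obtain ⟨hpG, ⟨hple, hpne⟩, hpc⟩ := hp
  have hxpG : B.mul u x p ∈ B.G u := hB.mul_mem u x hx p hpG
  have hxyG : B.mul u x y ∈ B.G u := hB.mul_mem u x hx y hy
  refine ⟨hxpG, ⟨hB.mul_le_mul' u p hpG y hy x hx hple, ?_⟩, ?_⟩
  · intro he
    apply hpne
    have h1 : B.mul u p x = B.mul u y x := by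
      rw [hB.mul_comm' u p hpG x hx, hB.mul_comm' u y hy x hx, he]
    exact cancel hB hpG hy hx h1
  · intro z hz hlt
    have hixz : B.mul u (B.inv u x) z ∈ B.G u :=
      hB.mul_mem u _ (hB.inv_mem u x hx) z hz
    have e1 : B.mul u (B.inv u x) (B.mul u x y) = y := by
      calc B.mul u (B.inv u x) (B.mul u x y)
          = B.mul u (B.mul u (B.inv u x) x) y :=
            (hB.mul_assoc' u _ (hB.inv_mem u x hx) x hx y hy).symm
        _ = B.mul u (B.mul u x (B.inv u x)) y := by
            rw [hB.mul_comm' u _ (hB.inv_mem u x hx) x hx]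
        _ = B.mul u (B.unit u) y := by rw [hB.mul_inv' u x hx]
        _ = y := unit_mul hB hy
    have e2 : B.mul u x (B.mul u (B.inv u x) z) = z := by
      calc B.mul u x (B.mul u (B.inv u x) z)
          = B.mul u (B.mul u x (B.inv u x)) z :=
            (hB.mul_assoc' u x hx _ (hB.inv_mem u x hx) z hz).symm
        _ = B.mul u (B.unit u) z := by rw [hB.mul_inv' u x hx]
        _ = z := unit_mul hB hz
    have hlt2 : B.lt u (B.mul u (B.inv u x) z) y := by
      constructor
      · have := hB.mul_le_mul' u z hz _ hxyG _ (hB.inv_mem u x hx) hlt.1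
        rwa [e1] at this
      · intro he
        apply hlt.2
        rw [← e2, he]
    have h3 := hpc _ hixz hlt2
    have h4 := hB.mul_le_mul' u _ hixz p hpG x hx h3
    rwa [e2] at h4

theorem lc_mul {u : K} (hKJ : u ∈ B.KJ) {x y : Λ} (hx : x ∈ B.G u) (hy : y ∈ B.G u) :
    B.mul u x (B.lowerCoverFn u y) = B.lowerCoverFn u (B.mul u x y) := by
  symm
  exact lcFn_eqB hB hKJ (hB.mul_mem u x hx y hy)
    (lc_translate hB hx hy (lcFn_spec hB hKJ hy))

theorem lc_inv_lc {u : K} (hKJ : u ∈ B.KJ) {y : Λ} (hy : y ∈ B.G u) :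
    B.lowerCoverFn u (B.inv u (B.lowerCoverFn u y)) = B.inv u y := by
  have hp := lcFn_spec hB hKJ hy
  set p := B.lowerCoverFn u y with hpdef
  have hpG : p ∈ B.G u := hp.1
  have hipG : B.inv u p ∈ B.G u := hB.inv_mem u p hpG
  have hiyG : B.inv u y ∈ B.G u := hB.inv_mem u y hy
  apply lcFn_eqB hB hKJ hipG
  refine ⟨hiyG, ⟨inv_anti hB hpG hy hp.2.1.1, ?_⟩, ?_⟩
  · intro he
    exact hp.2.1.2 (inv_inj hB hy hpG he).symm
  · intro z hz hlt
    -- z < inv p ; want z ≤ inv y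
    have hpz : B.lt u p (B.inv u z) := by
      constructor
      · have := inv_anti hB hz hipG hlt.1
        rwa [inv_invol hB hpG] at this
      · intro he
        apply hlt.2
        rw [he, inv_invol hB hz]
    have hniz : ¬ B.lt u (B.inv u z) y := by
      intro hl
      have h5 := hp.2.2 _ (hB.inv_mem u z hz) hl
      exact hpz.2 (hB.le_antisymm' u p hpG _ (hB.inv_mem u z hz) hpz.1 h5)
    rcases hB.le_total' u (B.inv u z) (hB.inv_mem u z hz) y hy with h6 | h6
    · by_cases he : B.inv u z = y
      · rw [← he, inv_invol hB hz]
        exact hB.le_refl' u z hz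
      · exact absurd ⟨h6, he⟩ hniz
    · have h7 := inv_anti hB hy (hB.inv_mem u z hz) h6
      rwa [inv_invol hB hz] at h7

end BunchData

namespace BunchData

variable {K : Type u} {Λ : Type v} [LinearOrder K] {B : BunchData K Λ} (hB : B.IsBunch)

theorem star_posB {w : K} {p q : K × Λ × Bool}
    (h : w ∈ B.KI ∧ B.mul w p.2.1 q.2.1 ∈ B.H w ∧
      ¬(p.2.1 ∈ B.H w ∧ p.2.2 = false ∧ q.2.1 ∈ B.H w ∧ q.2.2 = false)) :
    B.star w p q = (w, B.mul w p.2.1 q.2.1, true) := if_pos h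

theorem star_negB {w : K} {p q : K × Λ × Bool}
    (h : ¬(w ∈ B.KI ∧ B.mul w p.2.1 q.2.1 ∈ B.H w ∧
      ¬(p.2.1 ∈ B.H w ∧ p.2.2 = false ∧ q.2.1 ∈ B.H w ∧ q.2.2 = false))) :
    B.star w p q = (w, B.mul w p.2.1 q.2.1, false) := if_neg h

theorem negB_ev1 {p : K × Λ × Bool} (h1 : p.1 ∈ B.KI ∧ p.2.2 = true) :
    B.negB p = (p.1, B.inv p.1 p.2.1, false) := if_pos h1

theorem negB_ev2 {p : K × Λ × Bool} (h1 : ¬(p.1 ∈ B.KI ∧ p.2.2 = true))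
    (h2 : p.1 ∈ B.KI ∧ p.2.1 ∈ B.H p.1) :
    B.negB p = (p.1, B.inv p.1 p.2.1, true) := (if_neg h1).trans (if_pos h2)

theorem negB_ev3 {p : K × Λ × Bool} (h1 : ¬(p.1 ∈ B.KI ∧ p.2.2 = true))
    (h2 : ¬(p.1 ∈ B.KI ∧ p.2.1 ∈ B.H p.1)) (h3 : p.1 ∈ B.KJ) :
    B.negB p = (p.1, B.lowerCoverFn p.1 (B.inv p.1 p.2.1), false) :=
  ((if_neg h1).trans (if_neg h2)).trans (if_pos h3)

theorem negB_ev4 {p : K × Λ × Bool} (h1 : ¬(p.1 ∈ B.KI ∧ p.2.2 = true))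
    (h2 : ¬(p.1 ∈ B.KI ∧ p.2.1 ∈ B.H p.1)) (h3 : ¬ p.1 ∈ B.KJ) :
    B.negB p = (p.1, B.inv p.1 p.2.1, false) :=
  ((if_neg h1).trans (if_neg h2)).trans (if_neg h3)

theorem rho_geB {v : K} {p : K × Λ × Bool} (h : v ≤ p.1) : B.rho v p = p := if_pos h

theorem rho_lowB {v : K} {p : K × Λ × Bool} (h : ¬ v ≤ p.1) :
    B.rho v p = (v, B.tr p.1 v p.2.1, false) := if_neg h

include hB

theorem rho_eB {u v : K} (huv : u ≤ v) :
    B.rho v ((u, B.unit u, false) : K × Λ × Bool) = (v, B.unit v, false) := by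
  by_cases h : v ≤ u
  · have he : u = v := le_antisymm huv h
    subst he
    exact rho_geB h
  · rw [rho_lowB h]
    rw [show B.tr ((u, B.unit u, false) : K × Λ × Bool).1 v
      ((u, B.unit u, false) : K × Λ × Bool).2.1 = B.unit v from hB.tr_unit u v huv]

theorem carrier_val_G {p : K × Λ × Bool} (hp : p ∈ B.carrier) : p.2.1 ∈ B.G p.1 := by
  rcases hp with ⟨_, h⟩ | ⟨_, hKI, hH⟩
  · exact h
  · exact (hB.g2_sub p.1 hKI).1 hH

theorem gmulB_tB {p : K × Λ × Bool} (hp : p ∈ B.carrier) : B.gmulB p B.tB = p := by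
  obtain ⟨w, z, b⟩ := p
  have hzG : z ∈ B.G w := carrier_val_G hB hp
  unfold BunchData.gmulB
  rw [show max ((w, z, b) : K × Λ × Bool).1 (B.tB).1 = w from max_eq_left (hB.t_least w)]
  rw [rho_geB (show w ≤ ((w, z, b) : K × Λ × Bool).1 from le_refl w),
    show B.rho w B.tB = (w, B.unit w, false) from rho_eB hB (hB.t_least w)]
  have hval : B.mul w z (B.unit w) = z := hB.mul_unit' w z hzG
  rcases hp with ⟨hb, _⟩ | ⟨hb, hKI, hH⟩
  · simp only at hb
    subst hb
    rw [star_negB ?_]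
    · rw [hval]
    · rintro ⟨hKI, hmH, hni⟩
      rw [hval] at hmH
      exact hni ⟨hmH, rfl, (hB.g2_sub w hKI).2.1, rfl⟩
  · simp only at hb hKI hH
    subst hb
    rw [star_posB ⟨hKI, by rw [hval]; exact hH, fun h => by simp at h⟩]
    rw [hval]

theorem negB_e_Ko {u : K} (hKo : u ∈ B.Ko) :
    B.negB ((u, B.unit u, false) : K × Λ × Bool) = (u, B.unit u, false) := by
  rw [negB_ev4 (fun h => hB.disjOI u ⟨hKo, h.1⟩) (fun h => hB.disjOI u ⟨hKo, h.1⟩)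
    (fun h => hB.disjOJ u ⟨hKo, h⟩)]
  rw [show B.inv ((u, B.unit u, false) : K × Λ × Bool).1
    ((u, B.unit u, false) : K × Λ × Bool).2.1 = B.unit u from inv_unit hB u]

theorem negB_e_KI {u : K} (hKI : u ∈ B.KI) :
    B.negB ((u, B.unit u, false) : K × Λ × Bool) = (u, B.unit u, true) := by
  rw [negB_ev2 (fun h => by simpa using h.2) ⟨hKI, (hB.g2_sub u hKI).2.1⟩]
  rw [show B.inv ((u, B.unit u, false) : K × Λ × Bool).1
    ((u, B.unit u, false) : K × Λ × Bool).2.1 = B.unit u from inv_unit hB u]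

theorem negB_e_KJ {u : K} (hKJ : u ∈ B.KJ) :
    B.negB ((u, B.unit u, false) : K × Λ × Bool) =
      (u, B.lowerCoverFn u (B.unit u), false) := by
  rw [negB_ev3 (fun h => by simpa using h.2) (fun h => hB.disjJI u ⟨hKJ, h.1⟩) hKJ]
  rw [show B.inv ((u, B.unit u, false) : K × Λ × Bool).1
    ((u, B.unit u, false) : K × Λ × Bool).2.1 = B.unit u from inv_unit hB u]

theorem lc_ne_unit {u : K} (hKJ : u ∈ B.KJ) :
    B.lowerCoverFn u (B.unit u) ≠ B.unit u :=
  (lcFn_spec hB hKJ (hB.unit_mem u)).2.1.2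

theorem negB_fB : B.negB B.fB = B.tB := by
  unfold BunchData.fB BunchData.tB
  rcases hB.cover B.t with hKo | hKJ | hKI
  · rw [negB_e_Ko hB hKo, negB_e_Ko hB hKo]
  · rw [negB_e_KJ hB hKJ]
    have hlcG : B.lowerCoverFn B.t (B.unit B.t) ∈ B.G B.t :=
      (lcFn_spec hB hKJ (hB.unit_mem B.t)).1
    rw [negB_ev3 (fun h => by simpa using h.2) (fun h => hB.disjJI B.t ⟨hKJ, h.1⟩) hKJ]
    show (B.t, B.lowerCoverFn B.t (B.inv B.t (B.lowerCoverFn B.t (B.unit B.t))), false) = _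
    rw [lc_inv_lc hB hKJ (hB.unit_mem B.t), inv_unit hB]
  · rw [negB_e_KI hB hKI]
    rw [negB_ev1 ⟨hKI, rfl⟩]
    rw [show B.inv ((B.t, B.unit B.t, true) : K × Λ × Bool).1
      ((B.t, B.unit B.t, true) : K × Λ × Bool).2.1 = B.unit B.t from inv_unit hB B.t]

theorem impB_fB {p : K × Λ × Bool} (hp : p ∈ B.carrier) :
    B.impB p B.fB = B.negB p := by
  unfold BunchData.impB
  rw [negB_fB hB, gmulB_tB hB hp]

end BunchData

namespace BunchData

variable {K : Type u} {Λ : Type v} [LinearOrder K] {B : BunchData K Λ} (hB : B.IsBunch)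

omit hB in
theorem gmulB_sameL {u : K} {a b : Λ} {α β : Bool} :
    B.gmulB ((u, a, α) : K × Λ × Bool) (u, b, β) = B.star u (u, a, α) (u, b, β) := by
  unfold BunchData.gmulB
  rw [show max ((u,a,α) : K × Λ × Bool).1 ((u,b,β) : K × Λ × Bool).1 = u from max_self u]
  rw [rho_geB (show u ≤ ((u,a,α) : K × Λ × Bool).1 from le_refl u),
      rho_geB (show u ≤ ((u,b,β) : K × Λ × Bool).1 from le_refl u)]

include hB

theorem idem_eB (u : K) :
    B.gmulB ((u, B.unit u, false) : K × Λ × Bool) (u, B.unit u, false) =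
      (u, B.unit u, false) := by
  rw [gmulB_sameL]
  have hval : B.mul u ((u, B.unit u, false) : K × Λ × Bool).2.1
      ((u, B.unit u, false) : K × Λ × Bool).2.1 = B.unit u :=
    hB.mul_unit' u _ (hB.unit_mem u)
  rw [star_negB (fun h => h.2.2 ⟨(hB.g2_sub u h.1).2.1, rfl, (hB.g2_sub u h.1).2.1, rfl⟩)]
  rw [hval]

theorem gle_e_iffB (u v : K) :
    u ≤ v ↔ B.gle ((u, B.unit u, false) : K × Λ × Bool) (v, B.unit v, false) := by
  constructor
  · intro huv
    rcases eq_or_lt_of_le huv with he | hlt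
    · subst he
      exact Or.inr rfl
    · refine Or.inl (Or.inr ⟨?_, hlt⟩)
      rw [show max ((u, B.unit u, false) : K × Λ × Bool).1
        ((v, B.unit v, false) : K × Λ × Bool).1 = v from max_eq_right huv]
      rw [rho_eB hB huv,
        rho_geB (show v ≤ ((v, B.unit v, false) : K × Λ × Bool).1 from le_refl v)]
  · intro hg
    by_contra hc
    push_neg at hc
    rcases hg with hglt | heq
    · unfold BunchData.glt at hglt
      rw [show max ((u, B.unit u, false) : K × Λ × Bool).1
        ((v, B.unit v, false) : K × Λ × Bool).1 = u from max_eq_left hc.le] at hglt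
      rw [rho_geB (show u ≤ ((u, B.unit u, false) : K × Λ × Bool).1 from le_refl u),
        rho_eB hB hc.le] at hglt
      rcases hglt with (⟨_, hne⟩ | ⟨_, hb, _⟩) | ⟨_, hlt2⟩
      · exact hne rfl
      · simp at hb
      · exact absurd hlt2 (not_lt_of_ge hc.le)
    · have h1 : u = v := congrArg (fun p => p.1) heq
      exact absurd (le_of_eq h1) (not_le_of_gt hc)

theorem impB_e {u : K} {x : Λ} (hx : x ∈ B.G u) (β : Bool) :
    B.impB ((u, x, β) : K × Λ × Bool) (u, B.unit u, false) = (u, B.inv u x, false) := by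
  unfold BunchData.impB
  rcases hB.cover u with hKo | hKJ | hKI
  · rw [negB_e_Ko hB hKo, gmulB_sameL]
    rw [star_negB (fun h => hB.disjOI u ⟨hKo, h.1⟩)]
    rw [show B.mul u ((u, x, β) : K × Λ × Bool).2.1
      ((u, B.unit u, false) : K × Λ × Bool).2.1 = x from hB.mul_unit' u x hx]
    exact negB_ev4 (fun h => by simpa using h.2) (fun h => hB.disjOI u ⟨hKo, h.1⟩)
      (fun h => hB.disjOJ u ⟨hKo, h⟩)
  · rw [negB_e_KJ hB hKJ, gmulB_sameL]
    rw [star_negB (fun h => hB.disjJI u ⟨hKJ, h.1⟩)]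
    have hval : B.mul u ((u, x, β) : K × Λ × Bool).2.1
        ((u, B.lowerCoverFn u (B.unit u), false) : K × Λ × Bool).2.1 =
        B.lowerCoverFn u x := by
      show B.mul u x (B.lowerCoverFn u (B.unit u)) = B.lowerCoverFn u x
      rw [lc_mul hB hKJ hx (hB.unit_mem u), hB.mul_unit' u x hx]
    rw [hval]
    rw [negB_ev3 (fun h => by simpa using h.2) (fun h => hB.disjJI u ⟨hKJ, h.1⟩) hKJ]
    show (u, B.lowerCoverFn u (B.inv u (B.lowerCoverFn u x)), false) = _
    rw [lc_inv_lc hB hKJ hx]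
  · rw [negB_e_KI hB hKI, gmulB_sameL]
    have hval : B.mul u ((u, x, β) : K × Λ × Bool).2.1
        ((u, B.unit u, true) : K × Λ × Bool).2.1 = x := hB.mul_unit' u x hx
    by_cases hxH : x ∈ B.H u
    · rw [star_posB ⟨hKI, by rw [hval]; exact hxH, fun h => by simpa using h.2.2.2⟩]
      rw [hval]
      exact negB_ev1 ⟨hKI, rfl⟩
    · rw [star_negB (fun h => hxH (by rw [hval] at h; exact h.2.1))]
      rw [hval]
      exact negB_ev4 (fun h => by simpa using h.2) (fun h => hxH h.2)
        (fun h => hB.disjJI u ⟨h, hKI⟩)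

theorem impB_self {p : K × Λ × Bool} (hp : p ∈ B.carrier) :
    B.impB p p = (p.1, B.unit p.1, false) := by
  obtain ⟨w, z, b⟩ := p
  show B.impB (w, z, b) (w, z, b) = (w, B.unit w, false)
  unfold BunchData.impB
  rcases hp with ⟨hb, hzG⟩ | ⟨hb, hKI, hzH⟩
  · simp only at hb hzG
    subst hb
    rcases hB.cover w with hKo | hKJ | hKI
    · rw [negB_ev4 (p := ((w, z, false) : K × Λ × Bool)) (fun h => by simpa using h.2)
        (fun h => hB.disjOI w ⟨hKo, h.1⟩) (fun h => hB.disjOJ w ⟨hKo, h⟩)]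
      rw [gmulB_sameL, star_negB (fun h => hB.disjOI w ⟨hKo, h.1⟩)]
      rw [show B.mul w ((w, z, false) : K × Λ × Bool).2.1
        ((w, B.inv w z, false) : K × Λ × Bool).2.1 = B.unit w from hB.mul_inv' w z hzG]
      exact negB_e_Ko hB hKo
    · rw [negB_ev3 (p := ((w, z, false) : K × Λ × Bool)) (fun h => by simpa using h.2)
        (fun h => hB.disjJI w ⟨hKJ, h.1⟩) hKJ]
      rw [gmulB_sameL, star_negB (fun h => hB.disjJI w ⟨hKJ, h.1⟩)]
      have hval : B.mul w ((w, z, false) : K × Λ × Bool).2.1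
          ((w, B.lowerCoverFn w (B.inv w z), false) : K × Λ × Bool).2.1 =
          B.lowerCoverFn w (B.unit w) := by
        show B.mul w z (B.lowerCoverFn w (B.inv w z)) = B.lowerCoverFn w (B.unit w)
        rw [lc_mul hB hKJ hzG (hB.inv_mem w z hzG), hB.mul_inv' w z hzG]
      rw [hval]
      rw [negB_ev3 (fun h => by simpa using h.2) (fun h => hB.disjJI w ⟨hKJ, h.1⟩) hKJ]
      show (w, B.lowerCoverFn w (B.inv w (B.lowerCoverFn w (B.unit w))), false) = _
      rw [lc_inv_lc hB hKJ (hB.unit_mem w), inv_unit hB]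
    · by_cases hzH : z ∈ B.H w
      · rw [negB_ev2 (p := ((w, z, false) : K × Λ × Bool)) (fun h => by simpa using h.2)
          ⟨hKI, hzH⟩]
        rw [gmulB_sameL]
        have hval : B.mul w ((w, z, false) : K × Λ × Bool).2.1
            ((w, B.inv w z, true) : K × Λ × Bool).2.1 = B.unit w := hB.mul_inv' w z hzG
        rw [star_posB ⟨hKI, by rw [hval]; exact (hB.g2_sub w hKI).2.1,
          fun h => by simpa using h.2.2.2⟩]
        rw [hval, negB_ev1 ⟨hKI, rfl⟩]
        show (w, B.inv w (B.unit w), false) = _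
        rw [inv_unit hB]
      · rw [negB_ev4 (p := ((w, z, false) : K × Λ × Bool)) (fun h => by simpa using h.2)
          (fun h => hzH h.2) (fun h => hB.disjJI w ⟨h, hKI⟩)]
        rw [gmulB_sameL]
        have hval : B.mul w ((w, z, false) : K × Λ × Bool).2.1
            ((w, B.inv w z, false) : K × Λ × Bool).2.1 = B.unit w := hB.mul_inv' w z hzG
        rw [star_posB ⟨hKI, by rw [hval]; exact (hB.g2_sub w hKI).2.1,
          fun h => hzH h.1⟩]
        rw [hval, negB_ev1 ⟨hKI, rfl⟩]
        show (w, B.inv w (B.unit w), false) = _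
        rw [inv_unit hB]
  · simp only at hb hKI hzH
    subst hb
    have hzG : z ∈ B.G w := (hB.g2_sub w hKI).1 hzH
    rw [negB_ev1 (p := ((w, z, true) : K × Λ × Bool)) ⟨hKI, rfl⟩]
    rw [gmulB_sameL]
    have hval : B.mul w ((w, z, true) : K × Λ × Bool).2.1
        ((w, B.inv w z, false) : K × Λ × Bool).2.1 = B.unit w := hB.mul_inv' w z hzG
    rw [star_posB ⟨hKI, by rw [hval]; exact (hB.g2_sub w hKI).2.1,
      fun h => by simpa using h.2.1⟩]
    rw [hval, negB_ev1 ⟨hKI, rfl⟩]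
    show (w, B.inv w (B.unit w), false) = _
    rw [inv_unit hB]

omit hB in
theorem star_val (w : K) (p q : K × Λ × Bool) :
    (B.star w p q).2.1 = B.mul w p.2.1 q.2.1 := by
  unfold BunchData.star
  split <;> rfl

theorem glt_dotB (u : K) (z : Λ) :
    B.glt ((u, z, true) : K × Λ × Bool) (u, z, false) := by
  unfold BunchData.glt
  rw [show max ((u,z,true) : K × Λ × Bool).1 ((u,z,false) : K × Λ × Bool).1 = u from
    max_self u,
    rho_geB (show u ≤ ((u,z,true) : K × Λ × Bool).1 from le_refl u),
    rho_geB (show u ≤ ((u,z,false) : K × Λ × Bool).1 from le_refl u)]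
  exact Or.inl (Or.inr ⟨rfl, rfl, rfl⟩)

theorem not_gle_t_dotunit {w : K} :
    ¬ B.gle B.tB ((w, B.unit w, true) : K × Λ × Bool) := by
  rintro (hglt | heq)
  · unfold BunchData.glt at hglt
    rw [show max (B.tB).1 ((w, B.unit w, true) : K × Λ × Bool).1 = w from
      max_eq_right (hB.t_least w)] at hglt
    rw [show B.rho w B.tB = (w, B.unit w, false) from rho_eB hB (hB.t_least w),
      rho_geB (show w ≤ ((w, B.unit w, true) : K × Λ × Bool).1 from le_refl w)] at hglt
    rcases hglt with (⟨_, hne⟩ | ⟨_, hb, _⟩) | ⟨heq2, _⟩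
    · exact hne rfl
    · simp at hb
    · simpa using congrArg (fun q => q.2.2) heq2
  · simpa [BunchData.tB] using congrArg (fun q => q.2.2) heq

theorem idem_dotunit {u : K} (hKI : u ∈ B.KI) :
    B.gmulB ((u, B.unit u, true) : K × Λ × Bool) (u, B.unit u, true) =
      (u, B.unit u, true) := by
  rw [gmulB_sameL]
  have hval : B.mul u ((u, B.unit u, true) : K × Λ × Bool).2.1
      ((u, B.unit u, true) : K × Λ × Bool).2.1 = B.unit u :=
    hB.mul_unit' u _ (hB.unit_mem u)
  rw [star_posB ⟨hKI, by rw [hval]; exact (hB.g2_sub u hKI).2.1,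
    fun h => by simpa using h.2.1⟩, hval]

theorem not_idem_lc {u : K} (hKJ : u ∈ B.KJ) :
    B.gmulB ((u, B.lowerCoverFn u (B.unit u), false) : K × Λ × Bool)
      (u, B.lowerCoverFn u (B.unit u), false) ≠
      (u, B.lowerCoverFn u (B.unit u), false) := by
  intro heq
  have hlcG : B.lowerCoverFn u (B.unit u) ∈ B.G u :=
    (lcFn_spec hB hKJ (hB.unit_mem u)).1
  rw [gmulB_sameL, star_negB (fun h => hB.disjJI u ⟨hKJ, h.1⟩)] at heq
  have h1 := congrArg (fun q => q.2.1) heq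
  simp only at h1
  have h2 : B.mul u (B.lowerCoverFn u (B.unit u)) (B.lowerCoverFn u (B.unit u)) =
      B.mul u (B.unit u) (B.lowerCoverFn u (B.unit u)) := by
    rw [unit_mul hB hlcG]
    exact h1
  exact lc_ne_unit hB hKJ (cancel hB hlcG (hB.unit_mem u) hlcG h2)

theorem mul_dotunit_H {u : K} (hKI : u ∈ B.KI) {z : Λ} (hzH : z ∈ B.H u) (b : Bool) :
    B.gmulB ((u, z, b) : K × Λ × Bool) (u, B.unit u, true) = (u, z, true) := by
  rw [gmulB_sameL]
  have hval : B.mul u ((u, z, b) : K × Λ × Bool).2.1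
      ((u, B.unit u, true) : K × Λ × Bool).2.1 = z :=
    hB.mul_unit' u z ((hB.g2_sub u hKI).1 hzH)
  rw [star_posB ⟨hKI, by rw [hval]; exact hzH, fun h => by simpa using h.2.2.2⟩, hval]

theorem mul_dotunit_nH {u : K} {z : Λ} (hzG : z ∈ B.G u) (hz : z ∉ B.H u) (b : Bool) :
    B.gmulB ((u, z, b) : K × Λ × Bool) (u, B.unit u, true) = (u, z, false) := by
  rw [gmulB_sameL]
  have hval : B.mul u ((u, z, b) : K × Λ × Bool).2.1
      ((u, B.unit u, true) : K × Λ × Bool).2.1 = z := hB.mul_unit' u z hzG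
  rw [star_negB (fun h => hz (by rw [hval] at h; exact h.2.1)), hval]

theorem trB_calc {u v : K} (huv : u ≤ v) {x : Λ} (hx : x ∈ B.G u) :
    B.gmulB ((v, B.unit v, false) : K × Λ × Bool) (u, x, false) =
      (v, B.tr u v x, false) := by
  unfold BunchData.gmulB
  rw [show max ((v, B.unit v, false) : K × Λ × Bool).1 ((u,x,false) : K × Λ × Bool).1 = v
    from max_eq_left huv]
  rw [rho_geB (show v ≤ ((v, B.unit v, false) : K × Λ × Bool).1 from le_refl v)]
  rcases eq_or_lt_of_le huv with he | hlt
  · subst he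
    rw [rho_geB (show u ≤ ((u,x,false) : K × Λ × Bool).1 from le_refl u)]
    have hval : B.mul u ((u, B.unit u, false) : K × Λ × Bool).2.1
        ((u,x,false) : K × Λ × Bool).2.1 = x := unit_mul hB hx
    rw [star_negB ?_]
    · rw [hval, hB.tr_id u x hx]
    · rintro ⟨hKI, hmH, hni⟩
      rw [hval] at hmH
      exact hni ⟨(hB.g2_sub u hKI).2.1, rfl, hmH, rfl⟩
  · rw [rho_lowB (show ¬ v ≤ ((u,x,false) : K × Λ × Bool).1 from not_le_of_gt hlt)]
    have hval : B.mul v ((v, B.unit v, false) : K × Λ × Bool).2.1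
        (((v, B.tr ((u,x,false) : K × Λ × Bool).1 v ((u,x,false) : K × Λ × Bool).2.1,
          false) : K × Λ × Bool)).2.1 = B.tr u v x :=
      unit_mul hB (hB.tr_mem u v huv x hx)
    rw [star_negB ?_]
    · rw [hval]
    · rintro ⟨hKI, hmH, hni⟩
      exact hni ⟨(hB.g2_sub v hKI).2.1, rfl, hB.g2_tr v hKI u hlt x hx, rfl⟩

theorem isOdd_iffB : B.impB B.tB B.fB = B.tB ↔ B.t ∈ B.Ko := by
  rw [show B.impB B.tB B.fB = B.negB B.tB from
    impB_fB hB (Or.inl ⟨rfl, hB.unit_mem B.t⟩)]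
  show B.negB ((B.t, B.unit B.t, false) : K × Λ × Bool) = (B.t, B.unit B.t, false) ↔ _
  constructor
  · intro h
    rcases hB.cover B.t with hKo | hKJ | hKI
    · exact hKo
    · rw [negB_e_KJ hB hKJ] at h
      exact absurd (congrArg (fun q => q.2.1) h) (lc_ne_unit hB hKJ)
    · rw [negB_e_KI hB hKI] at h
      exact absurd (congrArg (fun q => q.2.2) h) (by simp)
  · intro hKo
    exact negB_e_Ko hB hKo

theorem idem_negBe_iff {u : K} :
    B.gmulB (B.negB ((u, B.unit u, false) : K × Λ × Bool))
      (B.negB ((u, B.unit u, false) : K × Λ × Bool)) =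
      B.negB ((u, B.unit u, false) : K × Λ × Bool) ↔ u ∉ B.KJ := by
  rcases hB.cover u with hKo | hKJ | hKI
  · rw [negB_e_Ko hB hKo]
    exact ⟨fun _ h => hB.disjOJ u ⟨hKo, h⟩, fun _ => idem_eB hB u⟩
  · rw [negB_e_KJ hB hKJ]
    exact ⟨fun h => absurd h (not_idem_lc hB hKJ), fun h => absurd hKJ h⟩
  · rw [negB_e_KI hB hKI]
    exact ⟨fun _ h => hB.disjJI u ⟨h, hKI⟩, fun _ => idem_dotunit hB hKI⟩

end BunchData

section P1F

open FLe BunchData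

theorem repr_part1_aux :
    (∀ (K Λ : Type) [LinearOrder K] (B : BunchData K Λ), B.IsBunch →
      ∀ (O : ChainOps (K × Λ × Bool)) (e : K → K × Λ × Bool),
        O = ⟨B.carrier, B.gmulB, B.impB, B.gle, B.tB, B.fB⟩ →
        e = (fun u => (u, B.unit u, false)) →
        O.kappa = Set.range e ∧
        (∀ u v : K, u ≤ v ↔ B.gle (e u) (e v)) ∧
        (∀ u : K, (u ∈ B.Ko ↔ e u ∈ O.kappaO) ∧ (u ∈ B.KJ ↔ O.inKJ (e u)) ∧
          (u ∈ B.KI ↔ O.inKI (e u))) ∧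
        (∀ u : K, O.layer (e u) = {p : K × Λ × Bool | p ∈ B.carrier ∧ p.1 = u}) ∧
        (∀ u : K, O.Gs (e u) = (fun z : Λ => ((u, z, false) : K × Λ × Bool)) '' B.G u) ∧
        (∀ u ∈ B.KI, O.Hs (e u) =
          (fun z : Λ => ((u, z, false) : K × Λ × Bool)) '' B.H u) ∧
        (∀ u : K, ∀ x ∈ B.G u, ∀ y ∈ B.G u,
          O.gmul (e u) (u, x, false) (u, y, false) = (u, B.mul u x y, false)) ∧
        (∀ u : K, ∀ x ∈ B.G u, O.ginv (e u) (u, x, false) = (u, B.inv u x, false)) ∧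
        (∀ u v : K, u ≤ v → ∀ x ∈ B.G u,
          O.tr (e v) (u, x, false) = (v, B.tr u v x, false))) := by
  intro K Λ _ B hB O e hO he
  subst hO
  simp only [he]
  clear he
  -- shared facts
  have hcarr : ∀ u : K, ((u, B.unit u, false) : K × Λ × Bool) ∈ B.carrier :=
    fun u => Or.inl ⟨rfl, hB.unit_mem u⟩
  have hkapmem : ∀ u : K, ((u, B.unit u, false) : K × Λ × Bool) ∈ B.carrier ∧
      B.gle B.tB (u, B.unit u, false) ∧
      B.gmulB ((u, B.unit u, false) : K × Λ × Bool) (u, B.unit u, false) =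
        (u, B.unit u, false) :=
    fun u => ⟨hcarr u, (gle_e_iffB hB B.t u).mp (hB.t_least u), idem_eB hB u⟩
  have hpartC : ∀ u : K, u ∈ B.KI ↔
      (((u, B.unit u, false) : K × Λ × Bool) ∈ B.carrier ∧
        B.gle B.tB (u, B.unit u, false) ∧
        B.gmulB ((u, B.unit u, false) : K × Λ × Bool) (u, B.unit u, false) =
          (u, B.unit u, false)) ∧
      (B.gmulB (B.impB ((u, B.unit u, false) : K × Λ × Bool) B.fB)
          (B.impB ((u, B.unit u, false) : K × Λ × Bool) B.fB) =
        B.impB ((u, B.unit u, false) : K × Λ × Bool) B.fB) ∧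
      ¬(((u, B.unit u, false) : K × Λ × Bool) = B.tB ∧ B.impB B.tB B.fB = B.tB) := by
    intro u
    constructor
    · intro hKI
      refine ⟨hkapmem u, ?_, ?_⟩
      · rw [impB_fB hB (hcarr u)]
        exact (idem_negBe_iff hB).mpr (fun h => hB.disjJI u ⟨h, hKI⟩)
      · rintro ⟨heq, hodd⟩
        have ht : u = B.t := congrArg (fun q => q.1) heq
        have hKo : B.t ∈ B.Ko := (isOdd_iffB hB).mp hodd
        exact hB.disjOI B.t ⟨hKo, ht ▸ hKI⟩
    · rintro ⟨_, hid, hnko⟩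
      rw [impB_fB hB (hcarr u)] at hid
      have hnKJ : u ∉ B.KJ := (idem_negBe_iff hB).mp hid
      rcases hB.cover u with hKo | hKJ | hKI
      · exfalso
        apply hnko
        have ht : u = B.t := hB.g1 hKo
        subst ht
        exact ⟨rfl, (isOdd_iffB hB).mpr hKo⟩
      · exact absurd hKJ hnKJ
      · exact hKI
  have hlayerC : ∀ (u : K) (p : K × Λ × Bool), p ∈ B.carrier →
      (B.impB p p = (u, B.unit u, false) ↔ p.1 = u) := by
    intro u p hpC
    rw [impB_self hB hpC]
    constructor
    · intro h
      exact congrArg (fun q => q.1) h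
    · intro h
      rw [← h]
  have hHsC : ∀ u ∈ B.KI, {x : K × Λ × Bool |
      x ∈ {x : K × Λ × Bool | x ∈ B.carrier ∧ B.impB x x = (u, B.unit u, false)} ∧
        B.gle (B.gmulB x (B.impB ((u, B.unit u, false) : K × Λ × Bool) B.fB)) x ∧
          B.gmulB x (B.impB ((u, B.unit u, false) : K × Λ × Bool) B.fB) ≠ x} =
      (fun z : Λ => ((u, z, false) : K × Λ × Bool)) '' B.H u := by
    intro u hKI
    have hcompl : B.impB ((u, B.unit u, false) : K × Λ × Bool) B.fB =
        ((u, B.unit u, true) : K × Λ × Bool) := by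
      rw [impB_fB hB (hcarr u), negB_e_KI hB hKI]
    apply Set.ext
    intro p
    rw [hcompl]
    constructor
    · rintro ⟨⟨hpC, himp⟩, _, hne⟩
      have hp1 : p.1 = u := (hlayerC u p hpC).mp himp
      obtain ⟨w, z, b⟩ := p
      simp only at hp1
      subst hp1
      rcases hpC with ⟨hb, hzG⟩ | ⟨hb, _, hzH⟩
      · simp only at hb hzG
        subst hb
        by_cases hzH : z ∈ B.H w
        · exact ⟨z, hzH, rfl⟩
        · exact absurd (mul_dotunit_nH hB hzG hzH false) hne
      · simp only at hb hzH
        subst hb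
        exact absurd (mul_dotunit_H hB hKI hzH true) hne
    · rintro ⟨z, hzH, rfl⟩
      have hzG : z ∈ B.G u := (hB.g2_sub u hKI).1 hzH
      refine ⟨⟨Or.inl ⟨rfl, hzG⟩, ?_⟩, ?_, ?_⟩
      · rw [impB_self hB (Or.inl ⟨rfl, hzG⟩)]
      · rw [mul_dotunit_H hB hKI hzH false]
        exact Or.inl (glt_dotB hB u z)
      · rw [mul_dotunit_H hB hKI hzH false]
        intro h
        simpa using congrArg (fun q => q.2.2) h
  refine ⟨?_, fun u v => gle_e_iffB hB u v, ?_, ?_, ?_, ?_, ?_, ?_, ?_⟩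
  · -- kappa
    apply Set.ext
    intro p
    constructor
    · rintro ⟨hpC, hle, hidem⟩
      obtain ⟨w, z, b⟩ := p
      have hzG : z ∈ B.G w := carrier_val_G hB hpC
      have h0 : B.star w ((w, z, b) : K × Λ × Bool) (w, z, b) = (w, z, b) := by
        rw [← gmulB_sameL (B := B)]
        exact hidem
      have h1 : B.mul w ((w, z, b) : K × Λ × Bool).2.1 ((w, z, b) : K × Λ × Bool).2.1
          = z := by
        rw [← star_val (B := B) w ((w, z, b) : K × Λ × Bool) (w, z, b), h0]
      have hz : z = B.unit w := by
        refine cancel hB hzG (hB.unit_mem w) hzG ?_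
        rw [unit_mul hB hzG]
        exact h1
      subst hz
      cases b
      · exact ⟨w, rfl⟩
      · exact absurd hle (not_gle_t_dotunit hB)
    · rintro ⟨u, rfl⟩
      exact hkapmem u
  · -- partition
    intro u
    refine ⟨?_, ?_, (hpartC u)⟩
    · constructor
      · intro hKo
        have ht : u = B.t := hB.g1 hKo
        subst ht
        exact ⟨rfl, (isOdd_iffB hB).mpr hKo⟩
      · rintro ⟨heq, hodd⟩
        have ht : u = B.t := congrArg (fun q => q.1) heq
        subst ht
        exact (isOdd_iffB hB).mp hodd
    · constructor
      · intro hKJ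
        refine ⟨hkapmem u, fun hid => ?_⟩
        have hid' : B.gmulB (B.impB ((u, B.unit u, false) : K × Λ × Bool) B.fB)
            (B.impB ((u, B.unit u, false) : K × Λ × Bool) B.fB) =
            B.impB ((u, B.unit u, false) : K × Λ × Bool) B.fB := hid
        rw [impB_fB hB (hcarr u)] at hid'
        exact (idem_negBe_iff hB).mp hid' hKJ
      · rintro ⟨_, hnid⟩
        by_contra hc
        apply hnid
        show B.gmulB (B.impB ((u, B.unit u, false) : K × Λ × Bool) B.fB)
            (B.impB ((u, B.unit u, false) : K × Λ × Bool) B.fB) =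
            B.impB ((u, B.unit u, false) : K × Λ × Bool) B.fB
        rw [impB_fB hB (hcarr u)]
        rcases hB.cover u with hKo | hKJ | hKI
        · rw [negB_e_Ko hB hKo]
          exact idem_eB hB u
        · exact absurd hKJ hc
        · rw [negB_e_KI hB hKI]
          exact idem_dotunit hB hKI
  · -- layer
    intro u
    apply Set.ext
    intro p
    constructor
    · rintro ⟨hpC, himp⟩
      exact ⟨hpC, (hlayerC u p hpC).mp himp⟩
    · rintro ⟨hpC, hp1⟩
      exact ⟨hpC, (hlayerC u p hpC).mpr hp1⟩
  · -- Gs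
    intro u
    apply Set.ext
    intro p
    by_cases hKI : u ∈ B.KI
    · constructor
      · rintro ⟨⟨hpC, himp⟩, hnd⟩
        have hp1 : p.1 = u := (hlayerC u p hpC).mp himp
        obtain ⟨w, z, b⟩ := p
        simp only at hp1
        subst hp1
        rcases hpC with ⟨hb, hzG⟩ | ⟨hb, _, hzH⟩
        · simp only at hb hzG
          subst hb
          exact ⟨z, hzG, rfl⟩
        · simp only at hb hzH
          subst hb
          exfalso
          apply hnd ((hpartC w).mp hKI)
          refine ⟨((w, z, false) : K × Λ × Bool), ?_, ?_⟩
          · show ((w, z, false) : K × Λ × Bool) ∈ {x : K × Λ × Bool |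
              x ∈ {x : K × Λ × Bool | x ∈ B.carrier ∧
                B.impB x x = (w, B.unit w, false)} ∧
                B.gle (B.gmulB x (B.impB ((w, B.unit w, false) : K × Λ × Bool) B.fB)) x ∧
                  B.gmulB x (B.impB ((w, B.unit w, false) : K × Λ × Bool) B.fB) ≠ x}
            rw [hHsC w hKI]
            exact ⟨z, hzH, rfl⟩
          · show B.gmulB ((w, z, false) : K × Λ × Bool)
              (B.impB ((w, B.unit w, false) : K × Λ × Bool) B.fB) = (w, z, true)
            rw [impB_fB hB (hcarr w), negB_e_KI hB hKI]
            exact mul_dotunit_H hB hKI hzH false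
      · rintro ⟨z, hzG, rfl⟩
        refine ⟨⟨Or.inl ⟨rfl, hzG⟩, by
          show B.impB ((u, z, false) : K × Λ × Bool) ((u, z, false) : K × Λ × Bool) =
            ((u, B.unit u, false) : K × Λ × Bool)
          rw [impB_self hB (Or.inl ⟨rfl, hzG⟩)]⟩, ?_⟩
        intro _ hdot
        obtain ⟨q, hqH, hqm⟩ := hdot
        have hqH' : q ∈ {x : K × Λ × Bool |
            x ∈ {x : K × Λ × Bool | x ∈ B.carrier ∧
              B.impB x x = (u, B.unit u, false)} ∧
              B.gle (B.gmulB x (B.impB ((u, B.unit u, false) : K × Λ × Bool) B.fB)) x ∧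
                B.gmulB x (B.impB ((u, B.unit u, false) : K × Λ × Bool) B.fB) ≠ x} := hqH
        rw [hHsC u hKI] at hqH'
        obtain ⟨c, hcH, rfl⟩ := hqH'
        have hqm' : B.gmulB ((u, c, false) : K × Λ × Bool)
            (B.impB ((u, B.unit u, false) : K × Λ × Bool) B.fB) = (u, z, false) := hqm
        rw [impB_fB hB (hcarr u), negB_e_KI hB hKI,
          mul_dotunit_H hB hKI hcH false] at hqm'
        simpa using congrArg (fun q => q.2.2) hqm'
    · constructor
      · rintro ⟨⟨hpC, himp⟩, _⟩
        have hp1 : p.1 = u := (hlayerC u p hpC).mp himp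
        obtain ⟨w, z, b⟩ := p
        simp only at hp1
        subst hp1
        rcases hpC with ⟨hb, hzG⟩ | ⟨hb, hKI', _⟩
        · simp only at hb hzG
          subst hb
          exact ⟨z, hzG, rfl⟩
        · exact absurd hKI' hKI
      · rintro ⟨z, hzG, rfl⟩
        refine ⟨⟨Or.inl ⟨rfl, hzG⟩, by
          show B.impB ((u, z, false) : K × Λ × Bool) ((u, z, false) : K × Λ × Bool) =
            ((u, B.unit u, false) : K × Λ × Bool)
          rw [impB_self hB (Or.inl ⟨rfl, hzG⟩)]⟩, ?_⟩
        intro hOKI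
        exact absurd ((hpartC u).mpr hOKI) hKI
  · -- Hs
    intro u hKI
    exact hHsC u hKI
  · -- gmul
    intro u x hx y hy
    unfold ChainOps.gmul
    have hmG : B.mul u x y ∈ B.G u := hB.mul_mem u x hx y hy
    split
    · rename_i hOKI
      have hKI : u ∈ B.KI := (hpartC u).mpr hOKI
      have hstep : ∀ β : Bool,
          B.impB (B.impB ((u, B.mul u x y, β) : K × Λ × Bool) (u, B.unit u, false))
            (u, B.unit u, false) = (u, B.mul u x y, false) := by
        intro β
        rw [impB_e hB hmG β, impB_e hB (hB.inv_mem u _ hmG) false, inv_invol hB hmG]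
      show B.impB (B.impB (B.gmulB ((u, x, false) : K × Λ × Bool) (u, y, false))
        ((u, B.unit u, false) : K × Λ × Bool)) ((u, B.unit u, false) : K × Λ × Bool) =
        (u, B.mul u x y, false)
      rw [gmulB_sameL (B := B)]
      unfold BunchData.star
      split
      · exact hstep true
      · exact hstep false
    · rename_i hOKI
      have hKI : u ∉ B.KI := fun h => hOKI ((hpartC u).mp h)
      show B.gmulB ((u, x, false) : K × Λ × Bool) (u, y, false) = (u, B.mul u x y, false)
      rw [gmulB_sameL (B := B), star_negB (fun h => hKI h.1)]
  · -- ginv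
    intro u x hx
    exact impB_e hB hx false
  · -- tr
    intro u v huv x hx
    exact trB_calc hB huv hx

end P1F



/-- Representation, direction C: `𝒢_{(X_𝒢)} = 𝒢` for every bunch of
layer groups `𝒢`, and `X_{(𝒢_X)} ≅ X` for every odd or even involutive FL_e-chain `X`.

The first half is expressed via the chain operations
`O = (carrier, ·, →, ≤, t, f)` of the constructed chain `X_𝒢`:  the map
`e : u ↦ (u, 1_{G_u}, false)` identifies the skeleton `κ` of `𝒢` (with its order and its
partition) with the skeleton of `X_𝒢`, identifies the layers, the layer groups, the
subgroups, the layer group operations and the transitions of `X_𝒢` with those of `𝒢`.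
The second half asserts an isomorphism `ψ` of FL_e-chains from `X` onto the chain
constructed from the bunch `𝒢_X` of `X`. -/
theorem representation_roundtrip :
    -- Part 1: 𝒢_{(X_𝒢)} = 𝒢
    (∀ (K Λ : Type) [LinearOrder K] (B : BunchData K Λ), B.IsBunch →
      ∀ (O : ChainOps (K × Λ × Bool)) (e : K → K × Λ × Bool),
        O = ⟨B.carrier, B.gmulB, B.impB, B.gle, B.tB, B.fB⟩ →
        e = (fun u => (u, B.unit u, false)) →
        -- the skeletons coincide, with their orders
        O.kappa = Set.range e ∧
        (∀ u v : K, u ≤ v ↔ B.gle (e u) (e v)) ∧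
        -- the partitions coincide
        (∀ u : K, (u ∈ B.Ko ↔ e u ∈ O.kappaO) ∧ (u ∈ B.KJ ↔ O.inKJ (e u)) ∧
          (u ∈ B.KI ↔ O.inKI (e u))) ∧
        -- the layers of X_𝒢 are the glued layers of 𝒢
        (∀ u : K, O.layer (e u) = {p : K × Λ × Bool | p ∈ B.carrier ∧ p.1 = u}) ∧
        -- the layer groups coincide
        (∀ u : K, O.Gs (e u) = (fun z : Λ => ((u, z, false) : K × Λ × Bool)) '' B.G u) ∧
        -- the layer subgroups coincide
        (∀ u ∈ B.KI, O.Hs (e u) =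
          (fun z : Λ => ((u, z, false) : K × Λ × Bool)) '' B.H u) ∧
        -- the layer group operations coincide
        (∀ u : K, ∀ x ∈ B.G u, ∀ y ∈ B.G u,
          O.gmul (e u) (u, x, false) (u, y, false) = (u, B.mul u x y, false)) ∧
        (∀ u : K, ∀ x ∈ B.G u, O.ginv (e u) (u, x, false) = (u, B.inv u x, false)) ∧
        -- the transitions coincide
        (∀ u v : K, u ≤ v → ∀ x ∈ B.G u,
          O.tr (e v) (u, x, false) = (v, B.tr u v x, false))) ∧
    -- Part 2: X_{(𝒢_X)} ≅ X
    (∀ (X : Type) [FLeChain X], OddEven X →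
      ∃ ψ : X → kappaT X × X × Bool,
        (∀ x : X, ψ x ∈ (bunchOfChain X).carrier) ∧
        (∀ p ∈ (bunchOfChain X).carrier, ∃! x : X, ψ x = p) ∧
        (∀ x y : X, x ≤ y ↔ (bunchOfChain X).gle (ψ x) (ψ y)) ∧
        (∀ x y : X, ψ (x * y) = (bunchOfChain X).gmulB (ψ x) (ψ y)) ∧
        (∀ x y : X, ψ (imp x y) = (bunchOfChain X).impB (ψ x) (ψ y)) ∧
        ψ 1 = (bunchOfChain X).tB ∧ ψ (fc X) = (bunchOfChain X).fB) := by
  constructor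
  · exact repr_part1_aux
  · intro X _ hOE
    obtain ⟨hinv, hoe⟩ := hOE
    exact ⟨psi X, psi_carrier hinv hoe, fun p hp => psi_unique hinv hoe hp,
      le_iff_gle hinv hoe, psi_mul hinv hoe, psi_imp hinv hoe, psi_one hinv hoe,
      psi_fc hinv hoe⟩
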